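/- arXiv:2210.03811 — 6 statements merged into one kernel-verified Lean document; each statement's English description precedes it below -/
import Mathlib

section
/- For every integer k ≥ 1, the partial sum of reciprocals of successors satisfies Σ_{i=1}^{k} 1/(u_i + 1) = 1 − 1/u_{k+1} (as real numbers); equivalently, 1/u_{k+1} = 1 − Σ_{i=1}^{k} 1/(u_i + 1). -/
/-- The sequence `u` of positive integers is defined by `u 1 = 1` and
`u (k+1) = u k * (u k + 1)` for `k ≥ 1`.  For every integer `k ≥ 1`,
`∑_{i=1}^{k} 1/(u i + 1) = 1 - 1/u (k+1)` as real numbers. -/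
theorem sum_reciprocal_succ_eq (u : ℕ → ℕ) (hu1 : u 1 = 1)
    (hu : ∀ k, 1 ≤ k → u (k + 1) = u k * (u k + 1)) :
    ∀ k, 1 ≤ k →
      ∑ i ∈ Finset.Icc 1 k, (1 : ℝ) / (u i + 1) = 1 - 1 / u (k + 1) := by
  have hpos : ∀ k, 1 ≤ k → 0 < u k := by
    intro k hk
    induction k with
    | zero => omega
    | succ n ih =>
      rcases Nat.eq_or_lt_of_le hk with h | h
      · have : n = 0 := by omega
        subst this; rw [hu1]; norm_num
      · have hn : 1 ≤ n := by omega
        rw [hu n hn]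
        have := ih hn
        positivity
  intro k hk
  induction k with
  | zero => omega
  | succ n ih =>
    rcases Nat.eq_or_lt_of_le hk with h | h
    · have h1 : n = 0 := by omega
      subst h1
      simp [hu 1 le_rfl, hu1]
      norm_num
    · have hn : 1 ≤ n := by omega
      rw [Finset.sum_Icc_succ_top hk, ih hn]
      have hun : (0:ℝ) < u n := by exact_mod_cast hpos n hn
      have hun1 : (0:ℝ) < u (n+1) := by exact_mod_cast hpos (n+1) (by omega)
      have h2 : (u (n+2) : ℝ) = u (n+1) * (u (n+1) + 1) := by
        exact_mod_cast congrArg (Nat.cast : ℕ → ℝ) (hu (n+1) (by omega))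
      rw [h2]
      field_simp
      ring
end

section
/- The value α := Σ_{k=1}^{∞} 1/u_k satisfies 1.69103 < α < 1.69104. -/
/-- The sequence `u` of positive integers is defined by `u 1 = 1` and
`u (k+1) = u k * (u k + 1)` for `k ≥ 1`.  The value
`α := ∑_{k=1}^{∞} 1/u k` satisfies `1.69103 < α < 1.69104`. -/
theorem alpha_bounds (u : ℕ → ℕ) (hu1 : u 1 = 1)
    (hu : ∀ k, 1 ≤ k → u (k + 1) = u k * (u k + 1)) :
    1.69103 < ∑' k : ℕ, (1 : ℝ) / u (k + 1) ∧
      ∑' k : ℕ, (1 : ℝ) / u (k + 1) < 1.69104 := by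
  -- explicit values
  have h2 : u 2 = 2 := by have := hu 1 le_rfl; rw [hu1] at this; simpa using this
  have h3 : u 3 = 6 := by have := hu 2 (by norm_num); rw [h2] at this; simpa using this
  have h4 : u 4 = 42 := by have := hu 3 (by norm_num); rw [h3] at this; simpa using this
  have h5 : u 5 = 1806 := by have := hu 4 (by norm_num); rw [h4] at this; norm_num at this; exact this
  have h6 : u 6 = 3263442 := by
    have := hu 5 (by norm_num); rw [h5] at this; norm_num at this; exact this
  have h7 : u 7 = 10650056950806 := by
    have := hu 6 (by norm_num); rw [h6] at this; norm_num at this; exact this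
  -- growth: 2^k ≤ u (k+1)
  have hgrow1 : ∀ k, 2 ^ k ≤ u (k + 1) := by
    intro k
    induction k with
    | zero => simp [hu1]
    | succ n ih =>
      have h := hu (n + 1) (by omega)
      rw [h, pow_succ]
      have h1 : 1 ≤ u (n + 1) := le_trans (Nat.one_le_two_pow) ih
      calc 2 ^ n * 2 ≤ u (n + 1) * 2 := Nat.mul_le_mul_right 2 ih
        _ ≤ u (n + 1) * (u (n + 1) + 1) := Nat.mul_le_mul_left _ (by omega)
  have hpos : ∀ k, 0 < u (k + 1) := fun k =>
    lt_of_lt_of_le (Nat.two_pow_pos k) (hgrow1 k)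
  -- growth from u 7
  have hgrow7 : ∀ k, u 7 * 2 ^ k ≤ u (k + 7) := by
    intro k
    induction k with
    | zero => simp
    | succ n ih =>
      have h := hu (n + 7) (by omega)
      have h1 : 1 ≤ u (n + 7) := hpos (n + 6)
      have : u 7 * 2 ^ n * 2 ≤ u (n + 7) * 2 := Nat.mul_le_mul_right 2 ih
      calc u 7 * 2 ^ (n + 1) = u 7 * 2 ^ n * 2 := by ring
        _ ≤ u (n + 7) * 2 := Nat.mul_le_mul_right 2 ih
        _ ≤ u (n + 7) * (u (n + 7) + 1) := Nat.mul_le_mul_left _ (by omega)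
        _ = u (n + 7 + 1) := (h).symm
  -- summability
  have hnonneg : ∀ k : ℕ, (0 : ℝ) ≤ 1 / u (k + 1) := fun k => by positivity
  have hle : ∀ k : ℕ, (1 : ℝ) / u (k + 1) ≤ (1 / 2) ^ k := by
    intro k
    rw [div_pow, one_pow]
    apply one_div_le_one_div_of_le (by positivity)
    calc ((2 : ℝ)) ^ k = ((2 ^ k : ℕ) : ℝ) := by push_cast; ring
      _ ≤ (u (k + 1) : ℝ) := by exact_mod_cast hgrow1 k
  have hsum : Summable (fun k : ℕ => (1 : ℝ) / u (k + 1)) :=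
    Summable.of_nonneg_of_le hnonneg hle
      (summable_geometric_of_lt_one (by norm_num) (by norm_num))
  -- split off the first 6 terms
  have hsplit := (Summable.sum_add_tsum_nat_add (f := fun k : ℕ => (1 : ℝ) / u (k + 1)) 6 hsum).symm
  have hS6 : ∑ i ∈ Finset.range 6, (1 : ℝ) / u (i + 1)
      = 1 + 1/2 + 1/6 + 1/42 + 1/1806 + 1/3263442 := by
    simp [Finset.sum_range_succ, hu1, h2, h3, h4, h5, h6]
  -- tail bounds
  have htail_nonneg : (0 : ℝ) ≤ ∑' k : ℕ, (1 : ℝ) / u (k + 6 + 1) :=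
    tsum_nonneg (fun k => by positivity)
  have htail_le : (∑' k : ℕ, (1 : ℝ) / u (k + 6 + 1))
      ≤ ∑' k : ℕ, (1 / 10650056950806 : ℝ) * (1 / 2) ^ k := by
    apply Summable.tsum_le_tsum _ ((summable_nat_add_iff (f := fun k : ℕ => (1 : ℝ) / u (k + 1)) 6).2 hsum)
      ((summable_geometric_of_lt_one (by norm_num) (by norm_num)).mul_left _)
    intro k
    have hk : (10650056950806 : ℝ) * 2 ^ k ≤ (u (k + 6 + 1) : ℝ) := by
      have h := hgrow7 k; rw [h7] at h
      have h' : ((10650056950806 : ℕ) : ℝ) * ((2:ℕ):ℝ) ^ k ≤ ((u (k + 7) : ℕ) : ℝ) := by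
        exact_mod_cast h
      norm_num at h'
      simpa [show k + 6 + 1 = k + 7 by ring] using h'
    calc (1:ℝ) / u (k + 6 + 1) ≤ 1 / (10650056950806 * 2 ^ k) :=
          one_div_le_one_div_of_le (by positivity) hk
      _ = (1 / 10650056950806 : ℝ) * (1 / 2) ^ k := by
          rw [div_pow, one_pow, one_div, one_div, one_div, mul_inv]
  have htail_val : (∑' k : ℕ, (1 / 10650056950806 : ℝ) * (1 / 2) ^ k)
      = 2 / 10650056950806 := by
    rw [tsum_mul_left, tsum_geometric_of_lt_one (by norm_num) (by norm_num)]
    norm_num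
  constructor
  · rw [hsplit, hS6]
    nlinarith [htail_nonneg]
  · rw [hsplit, hS6]
    rw [htail_val] at htail_le
    nlinarith [htail_le]
end

section
/- Let M ≥ 2 be an integer and let k ≥ 1 be the index with u_k < M ≤ u_{k+1}. Then Σ_{i=1}^{k} 1/u_i + M/((M − 1)·u_{k+1}) ≤ α + 1/(M − 1), where α := Σ_{i=1}^{∞} 1/u_i. -/
/-- The sequence `u` of positive integers is defined by `u 1 = 1` and
`u (k+1) = u k * (u k + 1)` for `k ≥ 1`.  Let `M ≥ 2` be an integer and let
`k ≥ 1` be the index with `u k < M ≤ u (k+1)`.  Then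
`∑_{i=1}^{k} 1/u i + M/((M-1)·u (k+1)) ≤ α + 1/(M-1)`, where
`α := ∑_{i=1}^{∞} 1/u i`. -/
theorem lee_lee_ratio_bound (u : ℕ → ℕ) (hu1 : u 1 = 1)
    (hu : ∀ k, 1 ≤ k → u (k + 1) = u k * (u k + 1))
    (M k : ℕ) (hM : 2 ≤ M) (hk : 1 ≤ k)
    (hukM : u k < M) (hMuk : M ≤ u (k + 1)) :
    ∑ i ∈ Finset.Icc 1 k, (1 : ℝ) / u i + M / ((M - 1) * u (k + 1)) ≤
      (∑' i : ℕ, (1 : ℝ) / u (i + 1)) + 1 / (M - 1) := by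
  have hpos : ∀ n, 1 ≤ n → 1 ≤ u n := by
    intro n hn
    induction n, hn using Nat.le_induction with
    | base => omega
    | succ m hm ih => rw [hu m hm]; nlinarith
  have hgrow : ∀ i, 2 ^ i ≤ u (i + 1) := by
    intro i
    induction i with
    | zero => simp [hu1]
    | succ n ih =>
      have h1 : 1 ≤ u (n + 1) := hpos _ (by omega)
      rw [hu (n + 1) (by omega)]
      calc 2 ^ (n + 1) = 2 ^ n * 2 := by ring
        _ ≤ u (n + 1) * (u (n + 1) + 1) := Nat.mul_le_mul ih (by omega)
  have hnn : ∀ i : ℕ, 0 ≤ (1 : ℝ) / u (i + 1) := fun i => by positivity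
  have hsum : Summable (fun i : ℕ => (1 : ℝ) / u (i + 1)) := by
    refine Summable.of_nonneg_of_le hnn (fun i => ?_)
      (summable_geometric_of_lt_one (r := (1/2 : ℝ)) (by norm_num) (by norm_num))
    have h2 : (2 : ℝ) ^ i ≤ (u (i + 1) : ℝ) := by exact_mod_cast hgrow i
    have hp : (1 / 2 : ℝ) ^ i = ((2 : ℝ) ^ i)⁻¹ := by rw [one_div, inv_pow]
    rw [hp, one_div]
    exact inv_anti₀ (by positivity) h2
  have hpart : ∑ i ∈ Finset.Icc 1 (k + 1), (1 : ℝ) / u i ≤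
      ∑' i : ℕ, (1 : ℝ) / u (i + 1) := by
    have heq : ∑ i ∈ Finset.Icc 1 (k + 1), (1 : ℝ) / u i =
        ∑ i ∈ Finset.range (k + 1), (1 : ℝ) / u (i + 1) := by
      rw [show Finset.Icc 1 (k + 1) = Finset.Ico 1 (k + 2) by exact (Finset.Ico_add_one_right_eq_Icc 1 (k + 1)).symm,
        Finset.sum_Ico_eq_sum_range]
      simp [add_comm]
    rw [heq]
    exact Summable.sum_le_tsum _ (fun i _ => hnn i) hsum
  have hsplit : ∑ i ∈ Finset.Icc 1 (k + 1), (1 : ℝ) / u i =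
      ∑ i ∈ Finset.Icc 1 k, (1 : ℝ) / u i + 1 / u (k + 1) :=
    Finset.sum_Icc_succ_top (by omega) _
  have hU : (1 : ℝ) ≤ (u (k + 1) : ℝ) := by exact_mod_cast hpos (k + 1) (by omega)
  have hU0 : (0 : ℝ) < (u (k + 1) : ℝ) := by linarith
  have hM1 : (1 : ℝ) ≤ (M : ℝ) - 1 := by
    have : (2 : ℝ) ≤ (M : ℝ) := by exact_mod_cast hM
    linarith
  have hM0 : (0 : ℝ) < (M : ℝ) - 1 := by linarith
  have key : (M : ℝ) / (((M : ℝ) - 1) * (u (k + 1) : ℝ)) ≤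
      1 / (u (k + 1) : ℝ) + 1 / ((M : ℝ) - 1) := by
    rw [div_add_div _ _ hU0.ne' hM0.ne', div_le_div_iff₀ (by positivity) (by positivity)]
    nlinarith [mul_nonneg (mul_nonneg hM0.le hU0.le) (by linarith : (0:ℝ) ≤ (u (k+1) : ℝ) - 1)]
  rw [hsplit] at hpart
  linarith [hpart, key]
end

section
/- Let a_1, …, a_n ∈ [0,1] be item sizes, let M ≥ 1 be an integer, and let f be a bin packing of the items that is M-bounded-space, using B bins. Let g : {1, …, n} → C be a coloring whose color classes are consecutive (i.e., if i ≤ j ≤ l and g(i) = g(l) then g(j) = g(i)) with exactly m distinct colors. Then there exists a bin packing f' of the same items in which every bin is monochromatic under g (all items in a bin have the same color) and the number of bins of f' is at most B + (m − 1)·M. -/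
/-- `f` is a bin packing of the items `a 0, …, a (n-1)`: it assigns each item
index to a bin (a natural number), and in each bin the item sizes sum to at
most `1`. -/
def IsPacking {n : ℕ} (a : Fin n → ℝ) (f : Fin n → ℕ) : Prop :=
  ∀ b : ℕ, ∑ i ∈ Finset.univ.filter (fun i => f i = b), a i ≤ 1

/-- The number of bins used by a packing `f`. -/
def numBins {n : ℕ} (f : Fin n → ℕ) : ℕ :=
  (Finset.univ.image f).card

/-- A packing is `M`-bounded-space if for every index `j`, the number of bins
containing both an item with index `≤ j` and an item with index `≥ j` is at
most `M`. -/
def BoundedSpacePacking {n : ℕ} (M : ℕ) (f : Fin n → ℕ) : Prop :=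
  ∀ j : Fin n,
    ((Finset.univ.image f).filter
      (fun b => (∃ i, i ≤ j ∧ f i = b) ∧ ∃ l, j ≤ l ∧ f l = b)).card ≤ M

/-- Let `a 0, …, a (n-1) ∈ [0,1]` be item sizes, `M ≥ 1` an integer, and `f`
an `M`-bounded-space bin packing of the items using `B` bins.  Let `g` be a
coloring of the items whose color classes are consecutive and which uses
exactly `m` distinct colors.  Then there is a bin packing `f'` of the same
items in which every bin is monochromatic under `g` and whose number of bins
is at most `B + (m - 1)·M`. -/
theorem monochromatic_repacking {n m : ℕ} {C : Type*} [DecidableEq C]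
    (a : Fin n → ℝ) (ha : ∀ i, a i ∈ Set.Icc (0 : ℝ) 1)
    (M : ℕ) (hM : 1 ≤ M) (f : Fin n → ℕ)
    (hf : IsPacking a f) (hspace : BoundedSpacePacking M f)
    (g : Fin n → C)
    (hconsec : ∀ i j l : Fin n, i ≤ j → j ≤ l → g i = g l → g j = g i)
    (hm : (Finset.univ.image g).card = m) :
    ∃ f' : Fin n → ℕ, IsPacking a f' ∧
      (∀ i j : Fin n, f' i = f' j → g i = g j) ∧
      numBins f' ≤ numBins f + (m - 1) * M := by
  classical
  rcases Nat.eq_zero_or_pos n with hn | hn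
  · subst hn
    exact ⟨f, hf, fun i => i.elim0, Nat.le_add_right _ _⟩
  have : NeZero n := ⟨hn.ne'⟩
  -- the color-rank function
  set c : Fin n → ℕ := fun i => ((Finset.univ.filter (fun j => j ≤ i)).image g).card
    with hcdef
  have cmono : ∀ {i j : Fin n}, i ≤ j → c i ≤ c j := by
    intro i j hij
    apply Finset.card_le_card
    apply Finset.image_subset_image
    intro x hx
    simp only [Finset.mem_filter, Finset.mem_univ, true_and] at hx ⊢
    exact le_trans hx hij
  have hc_eq_aux : ∀ i j : Fin n, i ≤ j → g i = g j → c i = c j := by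
    intro i j hij hg
    refine le_antisymm (cmono hij) ?_
    apply Finset.card_le_card
    intro col hcol
    simp only [Finset.mem_image, Finset.mem_filter, Finset.mem_univ, true_and] at hcol ⊢
    obtain ⟨l, hl, rfl⟩ := hcol
    by_cases hli : l ≤ i
    · exact ⟨l, hli, rfl⟩
    · have hil : i ≤ l := le_of_not_ge hli
      exact ⟨i, le_refl i, (hconsec i l j hil hl hg).symm⟩
  have hc_eq : ∀ i j : Fin n, g i = g j → c i = c j := by
    intro i j hg
    rcases le_total i j with h | h
    · exact hc_eq_aux i j h hg
    · exact (hc_eq_aux j i h hg.symm).symm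
  have hc_lt : ∀ i j : Fin n, i ≤ j → g i ≠ g j → c i < c j := by
    intro i j hij hg
    apply Finset.card_lt_card
    constructor
    · apply Finset.image_subset_image
      intro x hx
      simp only [Finset.mem_filter, Finset.mem_univ, true_and] at hx ⊢
      exact le_trans hx hij
    · intro hsub
      have : g j ∈ (Finset.univ.filter (fun x => x ≤ j)).image g := by
        simp only [Finset.mem_image, Finset.mem_filter, Finset.mem_univ, true_and]
        exact ⟨j, le_refl j, rfl⟩
      have := hsub this
      simp only [Finset.mem_image, Finset.mem_filter, Finset.mem_univ, true_and] at this
      obtain ⟨l, hl, hgl⟩ := this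
      exact hg ((hconsec l i j hl hij hgl).trans hgl)
  have hc_inj : ∀ i j : Fin n, c i = c j → g i = g j := by
    intro i j hc
    by_contra hg
    rcases le_total i j with h | h
    · exact absurd hc (Nat.ne_of_lt (hc_lt i j h hg))
    · exact absurd hc.symm (Nat.ne_of_lt (hc_lt j i h (fun e => hg e.symm)))
  set f' : Fin n → ℕ := fun i => Nat.pair (f i) (c i) with hf'def
  refine ⟨f', ?_, ?_, ?_⟩
  · -- packing
    intro b
    have hsub : (Finset.univ.filter (fun i => f' i = b)) ⊆
        (Finset.univ.filter (fun i => f i = (Nat.unpair b).1)) := by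
      intro i hi
      simp only [Finset.mem_filter, Finset.mem_univ, true_and] at hi ⊢
      rw [← hi]
      simp [hf'def]
    calc ∑ i ∈ Finset.univ.filter (fun i => f' i = b), a i
        ≤ ∑ i ∈ Finset.univ.filter (fun i => f i = (Nat.unpair b).1), a i :=
          Finset.sum_le_sum_of_subset_of_nonneg hsub (fun i _ _ => (ha i).1)
      _ ≤ 1 := hf _
  · -- monochromatic
    intro i j h
    have := (Nat.pair_eq_pair.mp h).2
    exact hc_inj i j this
  · -- bin count
    set K : Finset ℕ := Finset.univ.image c with hKdef
    have hKne : K.Nonempty := ⟨c ⟨0, hn⟩, Finset.mem_image_of_mem c (Finset.mem_univ _)⟩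
    have hKcard : K.card = m := by
      rw [← hm]
      apply Finset.card_bij (fun k hk => g (Finset.mem_image.mp hk).choose)
      · intro k hk
        exact Finset.mem_image_of_mem g (Finset.mem_univ _)
      · intro k1 hk1 k2 hk2 heq
        have h1 := (Finset.mem_image.mp hk1).choose_spec.2
        have h2 := (Finset.mem_image.mp hk2).choose_spec.2
        rw [← h1, ← h2]
        exact hc_eq _ _ heq
      · intro col hcol
        obtain ⟨i, _, rfl⟩ := Finset.mem_image.mp hcol
        have hki : c i ∈ K := Finset.mem_image_of_mem c (Finset.mem_univ _)
        refine ⟨c i, hki, ?_⟩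
        have := (Finset.mem_image.mp hki).choose_spec.2
        exact hc_inj _ _ this
    have hm1 : 1 ≤ m := by
      rw [← hKcard]; exact Finset.card_pos.mpr hKne
    set kmin : ℕ := K.min' hKne with hkmin
    set K' : Finset ℕ := K.erase kmin with hK'def
    have hK'card : K'.card = m - 1 := by
      rw [hK'def, Finset.card_erase_of_mem (K.min'_mem hKne), hKcard]
    set P : Finset (ℕ × ℕ) := Finset.univ.image (fun i => (f i, c i)) with hPdef
    have h1 : numBins f' = P.card := by
      have himg : Finset.univ.image f' = P.image (fun p => Nat.pair p.1 p.2) := by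
        rw [hPdef, Finset.image_image]
        rfl
      rw [numBins, himg]
      rw [Finset.card_image_of_injOn]
      intro p _ q _ h
      have := Nat.pair_eq_pair.mp h
      exact Prod.ext this.1 this.2
    set Q : Finset (ℕ × ℕ) := P.filter (fun p => ∃ q ∈ P, q.1 = p.1 ∧ q.2 < p.2) with hQdef
    have h2 : (P \ Q).card ≤ numBins f := by
      rw [numBins]
      apply Finset.card_le_card_of_injOn Prod.fst
      · intro p hp
        have hpP : p ∈ P := (Finset.mem_sdiff.mp hp).1
        obtain ⟨i, _, hi⟩ := Finset.mem_image.mp hpP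
        rw [← hi]
        exact Finset.mem_image_of_mem f (Finset.mem_univ _)
      · intro p hp q hq heq
        have hpP := Finset.mem_sdiff.mp hp
        have hqP := Finset.mem_sdiff.mp hq
        have hsnd : p.2 = q.2 := by
          by_contra hne
          rcases lt_or_gt_of_ne hne with h | h
          · exact hqP.2 (Finset.mem_filter.mpr ⟨hqP.1, ⟨p, hpP.1, heq, h⟩⟩)
          · exact hpP.2 (Finset.mem_filter.mpr ⟨hpP.1, ⟨q, hqP.1, heq.symm, h⟩⟩)
        exact Prod.ext heq hsnd
    have h3 : P.card ≤ (P \ Q).card + Q.card := by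
      have := Finset.card_le_card_sdiff_add_card (s := P) (t := Q)
      exact this
    have h4 : Q.card ≤ (m - 1) * M := by
      have hfib : ∀ p ∈ Q, p.2 ∈ K' := by
        intro p hp
        have hpP := (Finset.mem_filter.mp hp).1
        obtain ⟨q, hqP, _, hqlt⟩ := (Finset.mem_filter.mp hp).2
        have hpK : p.2 ∈ K := by
          obtain ⟨i, _, hi⟩ := Finset.mem_image.mp hpP
          rw [← hi]
          exact Finset.mem_image_of_mem c (Finset.mem_univ _)
        have hqK : q.2 ∈ K := by
          obtain ⟨i, _, hi⟩ := Finset.mem_image.mp hqP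
          rw [← hi]
          exact Finset.mem_image_of_mem c (Finset.mem_univ _)
        refine Finset.mem_erase.mpr ⟨?_, hpK⟩
        intro hcontra
        have := K.min'_le q.2 hqK
        omega
      rw [Finset.card_eq_sum_card_fiberwise hfib]
      calc ∑ k ∈ K', (Q.filter (fun p => p.2 = k)).card
          ≤ ∑ _k ∈ K', M := by
            apply Finset.sum_le_sum
            intro k hk
            -- k ∈ K, so there is an index with c-value k; take the minimal one
            have hkK : k ∈ K := Finset.mem_of_mem_erase hk
            obtain ⟨i0, _, hi0⟩ := Finset.mem_image.mp hkK
            have hSne : (Finset.univ.filter (fun i => c i = k)).Nonempty :=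
              ⟨i0, Finset.mem_filter.mpr ⟨Finset.mem_univ _, hi0⟩⟩
            set j : Fin n := (Finset.univ.filter (fun i => c i = k)).min' hSne with hjdef
            have hcj : c j = k :=
              (Finset.mem_filter.mp ((Finset.univ.filter (fun i => c i = k)).min'_mem hSne)).2
            calc (Q.filter (fun p => p.2 = k)).card
                ≤ ((Finset.univ.image f).filter
                    (fun b => (∃ i, i ≤ j ∧ f i = b) ∧ ∃ l, j ≤ l ∧ f l = b)).card := by
                  apply Finset.card_le_card_of_injOn Prod.fst
                  · intro p hp
                    have hpQ := (Finset.mem_filter.mp hp).1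
                    have hpk : p.2 = k := (Finset.mem_filter.mp hp).2
                    have hpP := (Finset.mem_filter.mp hpQ).1
                    obtain ⟨q, hqP, hq1, hqlt⟩ := (Finset.mem_filter.mp hpQ).2
                    obtain ⟨l, _, hl⟩ := Finset.mem_image.mp hpP
                    obtain ⟨i, _, hi⟩ := Finset.mem_image.mp hqP
                    have hfl : f l = p.1 := by rw [← hl]
                    have hcl : c l = k := by rw [← hpk, ← hl]
                    have hfi : f i = p.1 := by rw [← hq1, ← hi]
                    have hci : c i < k := by
                      have h5 : c i = q.2 := congrArg Prod.snd hi
                      omega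
                    refine Finset.mem_filter.mpr ⟨?_, ⟨i, ?_, hfi⟩, ⟨l, ?_, hfl⟩⟩
                    · rw [← hfl]; exact Finset.mem_image_of_mem f (Finset.mem_univ _)
                    · -- i ≤ j
                      by_contra hcon
                      have hji : j ≤ i := le_of_not_ge hcon
                      have := cmono hji
                      omega
                    · -- j ≤ l
                      exact (Finset.univ.filter (fun i => c i = k)).min'_le l
                        (Finset.mem_filter.mpr ⟨Finset.mem_univ _, hcl⟩)
                  · intro p hp q hq heq
                    have hpk : p.2 = k := (Finset.mem_filter.mp hp).2
                    have hqk : q.2 = k := (Finset.mem_filter.mp hq).2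
                    exact Prod.ext heq (hpk.trans hqk.symm)
              _ ≤ M := hspace j
        _ = (m - 1) * M := by rw [Finset.sum_const, smul_eq_mul, hK'card]
    omega
end

section
/- Let M ≥ 2 be an integer and let k ≥ 1 be the index with u_k < M ≤ u_{k+1}. For every finite sequence of item sizes a_1, …, a_n ∈ [0,1], there exists a bin packing of the items that is M-bounded-space and uses at most (Σ_{i=1}^{k} 1/u_i + M/((M − 1)·u_{k+1})) · opt_BP + (M − 1) bins, where opt_BP is the minimum number of bins over all bin packings of a_1, …, a_n (with no space constraint). -/
/-- The minimum number of bins over all bin packings of `a` (no space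
constraint). -/
noncomputable def optBP {n : ℕ} (a : Fin n → ℝ) : ℕ :=
  sInf {B : ℕ | ∃ f : Fin n → ℕ, IsPacking a f ∧ numBins f = B}


namespace LeeLeeAux

open Finset



/-- Class of an item: `M` if small (`x ≤ 1/M`), else `⌊1/x⌋₊ ∈ [1, M-1]`. -/
noncomputable def cls (M : ℕ) (x : ℝ) : ℕ :=
  if 1 / (M : ℝ) < x then ⌊1 / x⌋₊ else M

/-- Weight of an item. -/
noncomputable def wt (M : ℕ) (x : ℝ) : ℝ :=
  if 1 / (M : ℝ) < x then 1 / (⌊1 / x⌋₊ : ℝ) else (M : ℝ) / ((M : ℝ) - 1) * x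

noncomputable def phi (M q : ℕ) : ℝ :=
  1 / ((q : ℝ) - 1) - (M : ℝ) / (((M : ℝ) - 1) * q)

lemma floor_lt_of_lt (M : ℕ) (hM : 2 ≤ M) {x : ℝ} (h : 1 / (M : ℝ) < x) :
    ⌊1 / x⌋₊ < M := by
  have hM0 : (0:ℝ) < M := by positivity
  have hx : 0 < x := lt_trans (by positivity) h
  have h1x : 1 / x < M := (one_div_lt hx hM0).2 h
  exact (Nat.floor_lt (by positivity)).2 h1x

lemma cls_le (M : ℕ) (hM : 2 ≤ M) {x : ℝ} : cls M x ≤ M := by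
  unfold cls
  split_ifs with h
  · exact le_of_lt (floor_lt_of_lt M hM h)
  · exact le_refl _

lemma cls_small (M : ℕ) (hM : 2 ≤ M) {x : ℝ} (h : cls M x = M) : x ≤ 1 / M := by
  by_contra hc
  push_neg at hc
  have := floor_lt_of_lt M hM hc
  unfold cls at h
  rw [if_pos hc] at h
  omega

lemma cls_large (M : ℕ) (hM : 2 ≤ M) {x : ℝ} (hx1 : x ≤ 1) (h : cls M x ≠ M) :
    1 ≤ cls M x ∧ cls M x < M ∧ 1 / ((cls M x : ℝ) + 1) < x ∧ x ≤ 1 / (cls M x : ℝ) := by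
  unfold cls at h ⊢
  split_ifs with hl
  · have hM0 : (0:ℝ) < M := by positivity
    have hx : 0 < x := lt_trans (by positivity) hl
    have hfloor_lt : ⌊1/x⌋₊ < M := floor_lt_of_lt M hM hl
    have h1le : (1:ℝ) ≤ 1 / x := one_le_one_div hx hx1
    have hfloor_ge : 1 ≤ ⌊1/x⌋₊ := Nat.le_floor (by exact_mod_cast h1le)
    have hfpos : (0:ℝ) < (⌊1/x⌋₊ : ℝ) := by exact_mod_cast hfloor_ge
    refine ⟨hfloor_ge, hfloor_lt, ?_, ?_⟩
    · have h2 : 1/x < (⌊1/x⌋₊:ℝ) + 1 := Nat.lt_floor_add_one (1/x)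
      exact (one_div_lt hx (by positivity)).1 h2
    · have hfle : (⌊1/x⌋₊ : ℝ) ≤ 1/x := Nat.floor_le (by positivity)
      rw [le_div_iff₀ hfpos]
      have h3 := mul_le_mul_of_nonneg_left hfle hx.le
      rw [mul_one_div_cancel hx.ne'] at h3
      linarith
  · rw [if_neg hl] at h
    exact absurd rfl h

lemma cls_pos (M : ℕ) (hM : 2 ≤ M) {x : ℝ} (hx1 : x ≤ 1) : 1 ≤ cls M x := by
  by_cases h : cls M x = M
  · omega
  · exact (cls_large M hM hx1 h).1




lemma phi_eq (M q : ℕ) (hM : 2 ≤ M) (hq : 2 ≤ q) :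
    phi M q = ((M:ℝ) - q) / (((M:ℝ) - 1) * q * ((q:ℝ) - 1)) := by
  have hM1 : (1:ℝ) < M := by exact_mod_cast hM
  have hq1 : (1:ℝ) < q := by exact_mod_cast hq
  have h1 : (q:ℝ) - 1 ≠ 0 := by linarith
  have h2 : (M:ℝ) - 1 ≠ 0 := by linarith
  have h3 : (q:ℝ) ≠ 0 := by linarith
  unfold phi
  field_simp
  ring

lemma denom_pos (M q : ℕ) (hM : 2 ≤ M) (hq : 2 ≤ q) :
    (0:ℝ) < ((M:ℝ) - 1) * q * ((q:ℝ) - 1) := by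
  have hM1 : (1:ℝ) < M := by exact_mod_cast hM
  have hq1 : (1:ℝ) < q := by exact_mod_cast hq
  apply mul_pos (mul_pos (by linarith) (by linarith)) (by linarith)

lemma phi_nonneg (M q : ℕ) (hM : 2 ≤ M) (hq : 2 ≤ q) (hqM : q ≤ M) : 0 ≤ phi M q := by
  rw [phi_eq M q hM hq]
  have hqM' : (q:ℝ) ≤ M := by exact_mod_cast hqM
  exact div_nonneg (by linarith) (denom_pos M q hM hq).le

lemma phi_nonpos (M q : ℕ) (hM : 2 ≤ M) (hq : 2 ≤ q) (hqM : M ≤ q) : phi M q ≤ 0 := by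
  rw [phi_eq M q hM hq]
  have hqM' : (M:ℝ) ≤ q := by exact_mod_cast hqM
  exact div_nonpos_of_nonpos_of_nonneg (by linarith) (denom_pos M q hM hq).le

section U

variable (u : ℕ → ℕ) (hu1 : u 1 = 1) (hu : ∀ k, 1 ≤ k → u (k + 1) = u k * (u k + 1))

include hu1 hu in
lemma u_pos : ∀ j, 1 ≤ j → 1 ≤ u j := by
  intro j hj
  induction j, hj using Nat.le_induction with
  | base => omega
  | succ m hm ih => rw [hu m hm]; nlinarith

include hu1 hu in
lemma u_mono : ∀ i j, 1 ≤ i → i ≤ j → u i ≤ u j := by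
  intro i j hi hij
  induction j, hij using Nat.le_induction with
  | base => exact le_refl _
  | succ m hm ih =>
    have h1m : 1 ≤ m := le_trans hi hm
    have := u_pos u hu1 hu m h1m
    rw [hu m h1m]
    nlinarith

include hu1 hu in
lemma u_telescope (k : ℕ) :
    ∑ j ∈ Icc 1 k, (1 : ℝ) / ((u j : ℝ) + 1) = 1 - 1 / (u (k+1) : ℝ) := by
  induction k with
  | zero => simp [hu1]
  | succ m ih =>
    rw [Finset.sum_Icc_succ_top (by omega : 1 ≤ m + 1), ih]
    have h1m : (1:ℝ) ≤ (u (m+1) : ℝ) := by exact_mod_cast u_pos u hu1 hu (m+1) (by omega)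
    have hc : (u (m+1+1) : ℝ) = (u (m+1) : ℝ) * ((u (m+1) : ℝ) + 1) := by
      rw [hu (m+1) (by omega)]; push_cast; ring
    rw [hc]
    have h0 : (u (m+1):ℝ) ≠ 0 := by linarith
    have h02 : (u (m+1):ℝ) + 1 ≠ 0 := by linarith
    field_simp
    ring

end U




noncomputable def invq (q : ℕ) : ℝ := 1 / (q : ℝ)

lemma phi_le_density (M q : ℕ) (A : ℝ) (hM : 2 ≤ M) (hq : 2 ≤ q) (hA : 2 ≤ A)
    (hqA : A ≤ (q:ℝ)) :
    phi M q ≤ (((M:ℝ) - A) / (((M:ℝ)-1) * (A-1))) * invq q := by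
  rw [phi_eq M q hM hq]
  have hM1 : (1:ℝ) < M := by exact_mod_cast hM
  have hq1 : (1:ℝ) < (q:ℝ) := by exact_mod_cast hq
  have hq0 : (0:ℝ) < q := by linarith
  have e : (((M:ℝ) - A) / (((M:ℝ)-1)*(A-1))) * invq q
      = ((M:ℝ) - A) / ((((M:ℝ)-1)*(A-1))*q) := by
    rw [invq, div_mul_div_comm, mul_one]
  rw [e, div_le_div_iff₀ (denom_pos M q hM hq)
    (by apply mul_pos (mul_pos (by linarith) (by linarith)) hq0)]
  have key : (0:ℝ) ≤ ((M:ℝ)-1)*((M:ℝ)-1)*(q:ℝ)*((q:ℝ)-A) := by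
    apply mul_nonneg (mul_nonneg (mul_nonneg (by linarith) (by linarith)) (by linarith))
    linarith
  nlinarith [key]

section U

variable (u : ℕ → ℕ) (hu1 : u 1 = 1) (hu : ∀ k, 1 ≤ k → u (k + 1) = u k * (u k + 1))

include hu1 hu in
lemma psi_nonneg (M k : ℕ) (hM : 2 ≤ M) (hukM : u k < M) (s : ℕ) (hs : 1 ≤ s) :
    0 ≤ ∑ j ∈ Icc s k, phi M (u j + 1) := by
  apply Finset.sum_nonneg
  intro j hj
  rw [mem_Icc] at hj
  have h1j : 1 ≤ j := le_trans hs hj.1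
  have hj1 := u_pos u hu1 hu j h1j
  have hjk : u j ≤ u k := u_mono u hu1 hu j k h1j hj.2
  exact phi_nonneg M (u j + 1) hM (by omega) (by omega)

lemma Icc_insert_bot {s k : ℕ} (h : s ≤ k) : Icc s k = insert s (Icc (s+1) k) := by
  ext x; simp only [mem_Icc, mem_insert]; omega

include hu1 hu in
lemma extremal (M k : ℕ) (hM : 2 ≤ M) (hk : 1 ≤ k) (hukM : u k < M) (hMuk : M ≤ u (k+1)) :
    ∀ N (L : List ℕ) (s : ℕ), L.length ≤ N → 1 ≤ s → s ≤ k + 1 →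
      (∀ q ∈ L, 2 ≤ q) →
      (L.map invq).sum < 1 / (u s : ℝ) →
      (L.map (phi M)).sum ≤ ∑ j ∈ Icc s k, phi M (u j + 1) := by
  intro N
  induction N with
  | zero =>
    intro L s hL hs1 hsk hq hsum
    have hnil : L = [] := List.eq_nil_of_length_eq_zero (by omega)
    subst hnil
    simpa using psi_nonneg u hu1 hu M k hM hukM s hs1
  | succ N ih =>
    intro L s hL hs1 hsk hq hsum
    have husp : 1 ≤ u s := u_pos u hu1 hu s hs1
    have husr : (0:ℝ) < (u s : ℝ) := by
      have : 0 < u s := husp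
      exact_mod_cast this
    have hinv_nonneg : ∀ x ∈ L.map invq, 0 ≤ x := by
      intro x hx
      obtain ⟨q, hqL, rfl⟩ := List.mem_map.mp hx
      rw [invq]; positivity
    have hqgt : ∀ q ∈ L, u s < q := by
      intro q hqL
      have h1 : invq q ≤ (L.map invq).sum :=
        List.single_le_sum hinv_nonneg _ (List.mem_map_of_mem hqL)
      have hq2 := hq q hqL
      have hq0 : (0:ℝ) < q := by
        have : 0 < q := by omega
        exact_mod_cast this
      have hlt : 1/(q:ℝ) < 1/(u s:ℝ) := lt_of_le_of_lt h1 hsum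
      have := lt_of_one_div_lt_one_div hq0 hlt
      exact_mod_cast this
    by_cases hsk' : s ≤ k
    · by_cases hmem : (u s + 1) ∈ L
      · have hperm : L.Perm ((u s + 1) :: L.erase (u s + 1)) := List.perm_cons_erase hmem
        have hmapphi := (hperm.map (phi M)).sum_eq
        have hmapinv := (hperm.map invq).sum_eq
        simp only [List.map_cons, List.sum_cons] at hmapphi hmapinv
        have hlen : (L.erase (u s + 1)).length ≤ N := by
          have h1 := List.length_erase_of_mem hmem
          have hL1 : 1 ≤ L.length := List.length_pos_iff.mpr (List.ne_nil_of_mem hmem)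
          omega
        have hus1 : (u (s+1) : ℝ) = (u s : ℝ) * ((u s:ℝ) + 1) := by
          rw [hu s hs1]; push_cast; ring
        have hcast : invq (u s + 1) = 1/((u s : ℝ) + 1) := by rw [invq]; push_cast; ring
        have husr1 : (0:ℝ) < (u s:ℝ) + 1 := by linarith
        have hkey : 1/(u s:ℝ) - 1/((u s:ℝ)+1) = 1/((u s:ℝ)*((u s:ℝ)+1)) := by
          field_simp
          ring
        have hsum' : ((L.erase (u s + 1)).map invq).sum < 1/(u (s+1):ℝ) := by
          rw [hus1, ← hkey]
          rw [hcast] at hmapinv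
          linarith
        have hihyp := ih (L.erase (u s+1)) (s+1) hlen (by omega) (by omega)
          (fun q hq' => hq q (List.mem_of_mem_erase hq')) hsum'
        rw [hmapphi, Icc_insert_bot hsk', Finset.sum_insert (by rw [Finset.mem_Icc]; omega)]
        exact add_le_add (le_refl _) hihyp
      · have hq2 : ∀ q ∈ L, u s + 2 ≤ q := by
          intro q hqL
          have h1 := hqgt q hqL
          have hne : q ≠ u s + 1 := fun e => hmem (e ▸ hqL)
          omega
        set d : ℝ := ((M:ℝ) - ((u s:ℝ)+2)) / (((M:ℝ)-1) * (((u s:ℝ)+2)-1)) with hd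
        have hterm : ∀ q ∈ L, phi M q ≤ d * invq q := by
          intro q hqL
          rw [hd]
          apply phi_le_density M q ((u s:ℝ)+2) hM (hq q hqL) (by linarith)
          exact_mod_cast hq2 q hqL
        have hsum_le : (L.map (phi M)).sum ≤ d * (L.map invq).sum := by
          calc (L.map (phi M)).sum ≤ (L.map fun q => d * invq q).sum :=
                List.sum_le_sum hterm
          _ = d * (L.map invq).sum := List.sum_map_mul_left L invq d
        have hpsi := psi_nonneg u hu1 hu M k hM hukM s hs1
        rcases le_or_gt 0 d with hd0 | hd0
        · have h1 : d * (L.map invq).sum ≤ d * (1/(u s:ℝ)) :=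
            mul_le_mul_of_nonneg_left (le_of_lt hsum) hd0
          have h2 : d * (1/(u s:ℝ)) ≤ phi M (u s + 1) := by
            rw [phi_eq M (u s + 1) hM (by omega), hd]
            have husr1 : (1:ℝ) ≤ (u s : ℝ) := by exact_mod_cast husp
            have hM1 : (1:ℝ) < M := by exact_mod_cast hM
            have hcast : ((u s + 1 : ℕ):ℝ) = (u s : ℝ) + 1 := by push_cast; ring
            rw [hcast, div_mul_div_comm, mul_one]
            have hp1 : (0:ℝ) < ((M:ℝ)-1) * (((u s:ℝ)+2)-1) * (u s:ℝ) := by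
              apply mul_pos (mul_pos (by linarith) (by linarith)) (by linarith)
            have hp2 : (0:ℝ) < ((M:ℝ)-1) * ((u s:ℝ)+1) * (((u s:ℝ)+1)-1) := by
              apply mul_pos (mul_pos (by linarith) (by linarith)) (by linarith)
            rw [div_le_div_iff₀ hp1 hp2]
            nlinarith [mul_pos (mul_pos (sub_pos.mpr hM1) husr) (by linarith : (0:ℝ) < (u s:ℝ)+1)]
          have h3 : phi M (u s + 1) ≤ ∑ j ∈ Icc s k, phi M (u j + 1) := by
            rw [Icc_insert_bot hsk', Finset.sum_insert (by rw [Finset.mem_Icc]; omega)]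
            have := psi_nonneg u hu1 hu M k hM hukM (s+1) (by omega)
            linarith
          linarith
        · have hsum0 : 0 ≤ (L.map invq).sum := List.sum_nonneg hinv_nonneg
          have : d * (L.map invq).sum ≤ 0 :=
            mul_nonpos_of_nonpos_of_nonneg hd0.le hsum0
          linarith
    · have hs_eq : s = k + 1 := by omega
      subst hs_eq
      rw [Finset.Icc_eq_empty (by omega), Finset.sum_empty]
      calc (L.map (phi M)).sum ≤ (L.map fun _ => (0:ℝ)).sum := by
            apply List.sum_le_sum
            intro q hqL
            apply phi_nonpos M q hM (hq q hqL)
            have := hqgt q hqL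
            omega
      _ = 0 := by simp

end U





noncomputable def rnk (M : ℕ) (a : Fin n → ℝ) (i : Fin n) : ℕ :=
  (Finset.univ.filter (fun i' => i' < i ∧ cls M (a i') = cls M (a i))).card

noncomputable def pref (M : ℕ) (a : Fin n → ℝ) (i : Fin n) : ℝ :=
  ∑ i' ∈ Finset.univ.filter (fun i' => i' < i ∧ cls M (a i') = M), a i'

noncomputable def bidx (M : ℕ) (a : Fin n → ℝ) (i : Fin n) : ℕ :=
  if cls M (a i) = M then ⌊pref M a i * ((M:ℝ) / ((M:ℝ) - 1))⌋₊
  else rnk M a i / cls M (a i)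

noncomputable def pack (M : ℕ) (a : Fin n → ℝ) (i : Fin n) : ℕ :=
  Nat.pair (cls M (a i)) (bidx M a i)

lemma pref_nonneg (M : ℕ) (a : Fin n → ℝ) (ha : ∀ i, a i ∈ Set.Icc (0:ℝ) 1) (i : Fin n) :
    0 ≤ pref M a i :=
  Finset.sum_nonneg (fun i' _ => (ha i').1)

lemma pref_mono (M : ℕ) (a : Fin n → ℝ) (ha : ∀ i, a i ∈ Set.Icc (0:ℝ) 1)
    {i1 i2 : Fin n} (h12 : i1 ≤ i2) : pref M a i1 ≤ pref M a i2 := by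
  apply Finset.sum_le_sum_of_subset_of_nonneg
  · intro i' hi'
    simp only [mem_filter, mem_univ, true_and] at hi' ⊢
    exact ⟨lt_of_lt_of_le hi'.1 h12, hi'.2⟩
  · exact fun i' _ _ => (ha i').1

lemma rnk_mono (M : ℕ) (a : Fin n → ℝ) {i1 i2 : Fin n} (h12 : i1 ≤ i2)
    (hcls : cls M (a i1) = cls M (a i2)) : rnk M a i1 ≤ rnk M a i2 := by
  apply Finset.card_le_card
  intro i' hi'
  simp only [mem_filter, mem_univ, true_and] at hi' ⊢
  exact ⟨lt_of_lt_of_le hi'.1 h12, hcls ▸ hi'.2⟩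

lemma rnk_strict (M : ℕ) (a : Fin n → ℝ) {i1 i2 : Fin n} (h12 : i1 < i2)
    (hcls : cls M (a i1) = cls M (a i2)) : rnk M a i1 < rnk M a i2 := by
  have hsub : insert i1 (Finset.univ.filter
      (fun i' => i' < i1 ∧ cls M (a i') = cls M (a i1))) ⊆
      Finset.univ.filter (fun i' => i' < i2 ∧ cls M (a i') = cls M (a i2)) := by
    intro i' hi'
    rcases Finset.mem_insert.mp hi' with h | h
    · subst h; simp only [mem_filter, mem_univ, true_and]; exact ⟨h12, hcls⟩
    · simp only [mem_filter, mem_univ, true_and] at h ⊢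
      exact ⟨lt_trans h.1 h12, hcls ▸ h.2⟩
  have hni : i1 ∉ Finset.univ.filter
      (fun i' => i' < i1 ∧ cls M (a i') = cls M (a i1)) := by
    simp only [mem_filter, mem_univ, true_and]
    intro h; exact absurd h.1 (lt_irrefl i1)
  have := Finset.card_le_card hsub
  rw [Finset.card_insert_of_notMem hni] at this
  unfold rnk
  omega

lemma bidx_mono (M : ℕ) (a : Fin n → ℝ) (ha : ∀ i, a i ∈ Set.Icc (0:ℝ) 1) (hM : 2 ≤ M)
    {i1 i2 : Fin n} (h12 : i1 ≤ i2) (hcls : cls M (a i1) = cls M (a i2)) :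
    bidx M a i1 ≤ bidx M a i2 := by
  unfold bidx
  rw [hcls]
  split_ifs with h
  · apply Nat.floor_le_floor
    apply mul_le_mul_of_nonneg_right (pref_mono M a ha h12)
    have hM1 : (1:ℝ) < M := by exact_mod_cast hM
    apply div_nonneg <;> linarith
  · exact Nat.div_le_div_right (rnk_mono M a h12 hcls)

lemma pack_fst (M : ℕ) (a : Fin n → ℝ) (i : Fin n) :
    (pack M a i).unpair.1 = cls M (a i) := by
  rw [pack, Nat.unpair_pair]

lemma pack_snd (M : ℕ) (a : Fin n → ℝ) (i : Fin n) :
    (pack M a i).unpair.2 = bidx M a i := by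
  rw [pack, Nat.unpair_pair]





lemma pref_nonneg' (M : ℕ) (a : Fin n → ℝ) (ha : ∀ i, a i ∈ Set.Icc (0:ℝ) 1) (i : Fin n) :
    0 ≤ pref M a i :=
  Finset.sum_nonneg (fun i' _ => (ha i').1)

lemma pack_isPacking (M : ℕ) (hM : 2 ≤ M) (a : Fin n → ℝ)
    (ha : ∀ i, a i ∈ Set.Icc (0:ℝ) 1) : IsPacking a (pack M a) := by
  intro b
  set T := Finset.univ.filter (fun i => pack M a i = b) with hT
  rcases T.eq_empty_or_nonempty with hTe | hTne
  · rw [hTe, Finset.sum_empty]; norm_num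
  · obtain ⟨i0, hi0⟩ := hTne
    have hMr : (1:ℝ) < M := by exact_mod_cast hM
    have hkey : ∀ i ∈ T, cls M (a i) = cls M (a i0) ∧ bidx M a i = bidx M a i0 := by
      intro i hi
      rw [hT, mem_filter] at hi
      have hi0' := hi0
      rw [hT, mem_filter] at hi0'
      have hppp : pack M a i = pack M a i0 := by rw [hi.2, hi0'.2]
      unfold pack at hppp
      constructor
      · have := congrArg (fun t => t.unpair.1) hppp
        simpa [Nat.unpair_pair] using this
      · have := congrArg (fun t => t.unpair.2) hppp
        simpa [Nat.unpair_pair] using this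
    by_cases hc : cls M (a i0) = M
    · -- small-items bin
      set r : ℝ := (M:ℝ)/((M:ℝ)-1) with hr
      have hrpos : 0 < r := by rw [hr]; apply div_pos <;> linarith
      set m := bidx M a i0 with hm
      have hclsM : ∀ i ∈ T, cls M (a i) = M := fun i hi => (hkey i hi).1.trans hc
      have hbid : ∀ i ∈ T, bidx M a i = ⌊pref M a i * r⌋₊ := by
        intro i hi
        simp only [bidx]
        rw [if_pos (hclsM i hi), hr]
      have hfl : ∀ i ∈ T, ⌊pref M a i * r⌋₊ = m := by
        intro i hi
        rw [← hbid i hi]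
        exact (hkey i hi).2
      set imax := T.max' ⟨i0, hi0⟩ with himax
      set imin := T.min' ⟨i0, hi0⟩ with himin
      have hmaxT : imax ∈ T := T.max'_mem _
      have hminT : imin ∈ T := T.min'_mem _
      have hprefmax : pref M a imax * r < (m:ℝ) + 1 := by
        have h1 := Nat.lt_floor_add_one (pref M a imax * r)
        rw [hfl imax hmaxT] at h1
        exact_mod_cast h1
      have hprefmin : (m:ℝ) ≤ pref M a imin * r := by
        have h0 : 0 ≤ pref M a imin * r :=
          mul_nonneg (pref_nonneg' M a ha imin) hrpos.le
        have h1 := Nat.floor_le h0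
        rw [hfl imin hminT] at h1
        exact h1
      set Fmin := Finset.univ.filter (fun i' => i' < imin ∧ cls M (a i') = M) with hFmin
      set Fmax := Finset.univ.filter (fun i' => i' < imax ∧ cls M (a i') = M) with hFmax
      have hdisj : Disjoint (T.erase imax) Fmin := by
        rw [Finset.disjoint_left]
        intro i hi hFi
        have hiT := Finset.mem_of_mem_erase hi
        have hle : imin ≤ i := T.min'_le i hiT
        rw [hFmin, mem_filter] at hFi
        exact absurd hFi.2.1 (not_lt.mpr hle)
      have hsub : (T.erase imax) ∪ Fmin ⊆ Fmax := by
        intro i hi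
        rcases Finset.mem_union.mp hi with h | h
        · have hiT := Finset.mem_of_mem_erase h
          have hne := Finset.ne_of_mem_erase h
          have hlt : i < imax := lt_of_le_of_ne (T.le_max' i hiT) hne
          rw [hFmax, mem_filter]
          exact ⟨mem_univ _, hlt, hclsM i hiT⟩
        · rw [hFmin, mem_filter] at h
          rw [hFmax, mem_filter]
          have : imin ≤ imax := T.min'_le imax hmaxT
          exact ⟨mem_univ _, lt_of_lt_of_le h.2.1 this, h.2.2⟩
      have herase_le : ∑ i ∈ T.erase imax, a i ≤ pref M a imax - pref M a imin := by
        have h1 : ∑ i ∈ (T.erase imax) ∪ Fmin, a i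
            = ∑ i ∈ T.erase imax, a i + ∑ i ∈ Fmin, a i := Finset.sum_union hdisj
        have h2 : ∑ i ∈ (T.erase imax) ∪ Fmin, a i ≤ ∑ i ∈ Fmax, a i :=
          Finset.sum_le_sum_of_subset_of_nonneg hsub (fun i _ _ => (ha i).1)
        have h3 : ∑ i ∈ Fmin, a i = pref M a imin := rfl
        have h4 : ∑ i ∈ Fmax, a i = pref M a imax := rfl
        linarith
      have hdiff : pref M a imax - pref M a imin ≤ ((M:ℝ)-1)/M := by
        have h1 : (pref M a imax - pref M a imin) * r < 1 := by
          rw [sub_mul]; linarith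
        have h2 : pref M a imax - pref M a imin < 1 / r := (lt_div_iff₀ hrpos).mpr h1
        have h3 : 1 / r = ((M:ℝ)-1)/M := by rw [hr, one_div_div]
        linarith
      have hamax : a imax ≤ 1/(M:ℝ) := cls_small M hM (hclsM imax hmaxT)
      have hsplit : ∑ i ∈ T, a i = a imax + ∑ i ∈ T.erase imax, a i :=
        (Finset.add_sum_erase T a hmaxT).symm
      rw [hsplit]
      have hMne : (M:ℝ) ≠ 0 := by linarith
      have : (1:ℝ)/(M:ℝ) + ((M:ℝ)-1)/M = 1 := by field_simp; ring
      linarith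
    · -- large-items bin
      obtain ⟨hc1, hcM, _, _⟩ := cls_large M hM (ha i0).2 hc
      set c := cls M (a i0) with hcdef
      have hcls_i : ∀ i ∈ T, cls M (a i) = c := fun i hi => (hkey i hi).1
      have hai : ∀ i ∈ T, a i ≤ 1/(c:ℝ) := by
        intro i hi
        have h := cls_large M hM (ha i).2 (by rw [hcls_i i hi]; exact hc)
        rw [hcls_i i hi] at h
        exact h.2.2.2
      set m := bidx M a i0 with hm
      have hbid : ∀ i ∈ T, bidx M a i = rnk M a i / c := by
        intro i hi
        have hni : cls M (a i) ≠ M := by rw [hcls_i i hi]; exact hc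
        simp only [bidx]
        rw [if_neg hni, hcls_i i hi]
      have hdiv : ∀ i ∈ T, rnk M a i / c = m := by
        intro i hi
        rw [← hbid i hi]
        exact (hkey i hi).2
      have hc0 : 0 < c := hc1
      have hcard : T.card ≤ c := by
        have hle : T.card ≤ (Finset.Ico (m*c) (m*c+c)).card := by
          apply Finset.card_le_card_of_injOn (fun i => rnk M a i)
          · intro i hi
            rw [Finset.mem_coe, Finset.mem_Ico]
            have hd := hdiv i hi
            constructor
            · calc m*c = (rnk M a i / c)*c := by rw [hd]
                _ ≤ rnk M a i := Nat.div_mul_le_self _ _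
            · have h5 : rnk M a i / c < m+1 := by omega
              have h6 := (Nat.div_lt_iff_lt_mul hc0).1 h5
              rw [Nat.succ_mul] at h6
              omega
          · intro i1 h1 i2 h2 heq
            by_contra hne
            rcases lt_or_gt_of_ne hne with hlt | hlt
            · exact absurd heq (ne_of_lt (rnk_strict M a hlt
                (by rw [hcls_i i1 h1, hcls_i i2 h2])))
            · exact absurd heq (ne_of_gt (rnk_strict M a hlt
                (by rw [hcls_i i2 h2, hcls_i i1 h1])))
        rw [Nat.card_Ico] at hle
        omega
      have hcr : (0:ℝ) < (c:ℝ) := by exact_mod_cast hc0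
      calc ∑ i ∈ T, a i ≤ ∑ _i ∈ T, 1/(c:ℝ) := Finset.sum_le_sum hai
      _ = (T.card : ℝ) * (1/(c:ℝ)) := by rw [Finset.sum_const, nsmul_eq_mul]
      _ ≤ (c:ℝ) * (1/(c:ℝ)) := by
          apply mul_le_mul_of_nonneg_right ?_ (by positivity)
          exact_mod_cast hcard
      _ = 1 := mul_one_div_cancel hcr.ne'





lemma pack_boundedSpace (M : ℕ) (hM : 2 ≤ M) (a : Fin n → ℝ)
    (ha : ∀ i, a i ∈ Set.Icc (0:ℝ) 1) : BoundedSpacePacking M (pack M a) := by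
  intro j
  have hcard : (Finset.Icc 1 M).card = M := by rw [Nat.card_Icc]; omega
  have hmain : ((Finset.univ.image (pack M a)).filter
      (fun b => (∃ i, i ≤ j ∧ pack M a i = b) ∧ ∃ l, j ≤ l ∧ pack M a l = b)).card
      ≤ (Finset.Icc 1 M).card := by
    apply Finset.card_le_card_of_injOn (fun b => b.unpair.1)
    · intro b hb
      rw [Finset.mem_coe, mem_filter] at hb
      obtain ⟨i, _, hib⟩ := hb.2.1
      rw [← hib, pack]; beta_reduce; rw [Nat.unpair_pair]
      rw [Finset.mem_coe, Finset.mem_Icc]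
      exact ⟨cls_pos M hM (ha i).2, cls_le M hM⟩
    · intro b1 hb1 b2 hb2 heq
      have heq' : b1.unpair.1 = b2.unpair.1 := heq
      simp only [coe_filter, Set.mem_setOf_eq] at hb1 hb2
      obtain ⟨_, ⟨i1, hi1j, hi1⟩, ⟨l1, hjl1, hl1⟩⟩ := hb1
      obtain ⟨_, ⟨i2, hi2j, hi2⟩, ⟨l2, hjl2, hl2⟩⟩ := hb2
      have c1i : cls M (a i1) = b1.unpair.1 := by rw [← hi1, pack, Nat.unpair_pair]
      have c1l : cls M (a l1) = b1.unpair.1 := by rw [← hl1, pack, Nat.unpair_pair]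
      have c2i : cls M (a i2) = b2.unpair.1 := by rw [← hi2, pack, Nat.unpair_pair]
      have c2l : cls M (a l2) = b2.unpair.1 := by rw [← hl2, pack, Nat.unpair_pair]
      have d1i : bidx M a i1 = b1.unpair.2 := by rw [← hi1, pack, Nat.unpair_pair]
      have d1l : bidx M a l1 = b1.unpair.2 := by rw [← hl1, pack, Nat.unpair_pair]
      have d2i : bidx M a i2 = b2.unpair.2 := by rw [← hi2, pack, Nat.unpair_pair]
      have d2l : bidx M a l2 = b2.unpair.2 := by rw [← hl2, pack, Nat.unpair_pair]
      have h12 : bidx M a i1 ≤ bidx M a l2 :=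
        bidx_mono M a ha hM (le_trans hi1j hjl2) (by rw [c1i, c2l, heq'])
      have h21 : bidx M a i2 ≤ bidx M a l1 :=
        bidx_mono M a ha hM (le_trans hi2j hjl1) (by rw [c2i, c1l, heq'])
      have hsnd : b1.unpair.2 = b2.unpair.2 := by omega
      have hb1' : b1 = Nat.pair b1.unpair.1 b1.unpair.2 := (Nat.pair_unpair b1).symm
      have hb2' : b2 = Nat.pair b2.unpair.1 b2.unpair.2 := (Nat.pair_unpair b2).symm
      rw [hb1', hb2', heq', hsnd]
  rw [hcard] at hmain
  exact hmain




lemma wt_large (M : ℕ) (hM : 2 ≤ M) {x : ℝ} (h : cls M x ≠ M) :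
    wt M x = 1 / (cls M x : ℝ) := by
  unfold cls at h
  unfold wt cls
  split_ifs with hp
  · rfl
  · rw [if_neg hp] at h
    exact absurd rfl h

lemma wt_small (M : ℕ) (hM : 2 ≤ M) {x : ℝ} (h : cls M x = M) :
    wt M x = (M : ℝ) / ((M : ℝ) - 1) * x := by
  unfold cls at h
  unfold wt
  split_ifs with hp
  · rw [if_pos hp] at h
    have := floor_lt_of_lt M hM hp
    omega
  · rfl


/-- Per-class bin count bound. -/
lemma class_card_le (M : ℕ) (hM : 2 ≤ M) (a : Fin n → ℝ)
    (ha : ∀ i, a i ∈ Set.Icc (0:ℝ) 1) (c : ℕ) (hc : c ∈ Finset.Icc 1 M) :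
    (((Finset.univ.image (pack M a)).filter (fun b => b.unpair.1 = c)).card : ℝ)
      ≤ (∑ i ∈ Finset.univ.filter (fun i => cls M (a i) = c), wt M (a i))
        + (if c = M then (1:ℝ) else ((c:ℝ) - 1)/c) := by
  rw [Finset.mem_Icc] at hc
  set Tc := Finset.univ.filter (fun i => cls M (a i) = c) with hTc
  have hmemTc : ∀ i ∈ Tc, cls M (a i) = c := by
    intro i hi
    rw [hTc, mem_filter] at hi
    exact hi.2
  have hsub_c : (Finset.univ.image (pack M a)).filter (fun b => b.unpair.1 = c)
      ⊆ Tc.image (pack M a) := by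
    intro b hb
    rw [mem_filter, Finset.mem_image] at hb
    obtain ⟨⟨i, _, hib⟩, hbc⟩ := hb
    rw [Finset.mem_image]
    refine ⟨i, ?_, hib⟩
    rw [hTc, mem_filter]
    refine ⟨mem_univ _, ?_⟩
    rw [← hbc, ← hib, pack, Nat.unpair_pair]
  have hcard1 : ((Finset.univ.image (pack M a)).filter (fun b => b.unpair.1 = c)).card
      ≤ (Tc.image (bidx M a)).card := by
    apply le_trans (Finset.card_le_card hsub_c)
    have him : Tc.image (pack M a) = (Tc.image (bidx M a)).image (Nat.pair c) := by
      rw [Finset.image_image]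
      apply Finset.image_congr
      intro i hi
      simp only [Function.comp_apply, pack]
      rw [hmemTc i hi]
    rw [him]
    exact Finset.card_image_le
  by_cases hcM : c = M
  · -- small class
    rw [if_pos hcM]
    set r : ℝ := (M:ℝ)/((M:ℝ)-1) with hr
    have hMr : (1:ℝ) < M := by exact_mod_cast hM
    have hrpos : 0 < r := by rw [hr]; apply div_pos <;> linarith
    set S : ℝ := ∑ i ∈ Tc, a i with hS
    have hS0 : 0 ≤ S := Finset.sum_nonneg (fun i _ => (ha i).1)
    have hbid : ∀ i ∈ Tc, bidx M a i = ⌊pref M a i * r⌋₊ := by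
      intro i hi
      simp only [bidx]
      rw [if_pos ((hmemTc i hi).trans hcM), hr]
    have hprefS : ∀ i ∈ Tc, pref M a i ≤ S := by
      intro i hi
      rw [hS]
      apply Finset.sum_le_sum_of_subset_of_nonneg
      · intro i' hi'
        rw [mem_filter] at hi'
        rw [hTc, mem_filter]
        exact ⟨mem_univ _, hi'.2.2.trans hcM.symm⟩
      · exact fun i' _ _ => (ha i').1
    have himg : Tc.image (bidx M a) ⊆ Finset.range (⌊S * r⌋₊ + 1) := by
      intro v hv
      rw [Finset.mem_image] at hv
      obtain ⟨i, hi, hiv⟩ := hv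
      rw [Finset.mem_range, ← hiv, hbid i hi]
      have := Nat.floor_le_floor (mul_le_mul_of_nonneg_right (hprefS i hi) hrpos.le)
      omega
    have hcard2 : (Tc.image (bidx M a)).card ≤ ⌊S * r⌋₊ + 1 := by
      apply le_trans (Finset.card_le_card himg)
      rw [Finset.card_range]
    have hwteach : ∀ i ∈ Tc, wt M (a i) = r * a i := by
      intro i hi
      rw [wt_small M hM ((hmemTc i hi).trans hcM), hr]
    have hwt : ∑ i ∈ Tc, wt M (a i) = r * S := by
      rw [Finset.sum_congr rfl hwteach, ← Finset.mul_sum]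
    rw [hwt]
    have hfloor : (⌊S * r⌋₊ : ℝ) ≤ S * r := Nat.floor_le (by positivity)
    calc (((Finset.univ.image (pack M a)).filter (fun b => b.unpair.1 = c)).card : ℝ)
        ≤ ((⌊S * r⌋₊ + 1 : ℕ) : ℝ) := by exact_mod_cast le_trans hcard1 hcard2
    _ ≤ S * r + 1 := by push_cast; linarith
    _ = r * S + 1 := by ring
  · -- large class
    have hc1 : 1 ≤ c := hc.1
    have hcr : (0:ℝ) < (c:ℝ) := by exact_mod_cast hc1
    rw [if_neg hcM]
    rcases Tc.eq_empty_or_nonempty with hTe | hTne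
    · have hsube : (Finset.univ.image (pack M a)).filter (fun b => b.unpair.1 = c) ⊆ ∅ := by
        rw [← Finset.image_empty (pack M a), ← hTe]
        exact hsub_c
      rw [Finset.subset_empty.mp hsube, hTe]
      simp only [Finset.card_empty, Finset.sum_empty, Nat.cast_zero, zero_add]
      apply div_nonneg ?_ hcr.le
      have : (1:ℝ) ≤ c := by exact_mod_cast hc1
      linarith
    · set nc := Tc.card with hnc
      have hnc1 : 1 ≤ nc := Finset.card_pos.mpr hTne
      have hrnk : ∀ i ∈ Tc, rnk M a i ≤ nc - 1 := by
        intro i hi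
        have hsb : Finset.univ.filter
            (fun i' => i' < i ∧ cls M (a i') = cls M (a i)) ⊆ Tc.erase i := by
          intro i' hi'
          rw [mem_filter] at hi'
          rw [Finset.mem_erase]
          refine ⟨ne_of_lt hi'.2.1, ?_⟩
          rw [hTc, mem_filter]
          refine ⟨mem_univ _, ?_⟩
          rw [hi'.2.2, hmemTc i hi]
        have hle := Finset.card_le_card hsb
        rw [Finset.card_erase_of_mem hi] at hle
        exact hle
      have hbid : ∀ i ∈ Tc, bidx M a i = rnk M a i / c := by
        intro i hi
        simp only [bidx]
        rw [hmemTc i hi, if_neg hcM]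
      have himg : Tc.image (bidx M a) ⊆ Finset.range ((nc - 1)/c + 1) := by
        intro v hv
        rw [Finset.mem_image] at hv
        obtain ⟨i, hi, hiv⟩ := hv
        rw [Finset.mem_range, ← hiv, hbid i hi]
        have h1 := Nat.div_le_div_right (c := c) (hrnk i hi)
        omega
      have hcard2 : (Tc.image (bidx M a)).card ≤ (nc - 1)/c + 1 := by
        apply le_trans (Finset.card_le_card himg)
        rw [Finset.card_range]
      have hwteach : ∀ i ∈ Tc, wt M (a i) = 1/(c:ℝ) := by
        intro i hi
        rw [wt_large M hM (by rw [hmemTc i hi]; exact hcM), hmemTc i hi]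
      have hwt : ∑ i ∈ Tc, wt M (a i) = (nc : ℝ) * (1/(c:ℝ)) := by
        rw [Finset.sum_congr rfl hwteach, Finset.sum_const, hnc, nsmul_eq_mul]
      rw [hwt]
      have hkey : ((nc:ℝ) - 1)/c + 1 = (nc:ℝ) * (1/(c:ℝ)) + ((c:ℝ)-1)/c := by
        field_simp
        ring
      calc (((Finset.univ.image (pack M a)).filter (fun b => b.unpair.1 = c)).card : ℝ)
          ≤ (((nc - 1)/c + 1 : ℕ) : ℝ) := by exact_mod_cast le_trans hcard1 hcard2
      _ ≤ ((nc:ℝ) - 1)/c + 1 := by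
          push_cast
          have h1 : ((((nc - 1):ℕ)/c : ℕ) : ℝ) ≤ (((nc-1):ℕ):ℝ)/(c:ℝ) := Nat.cast_div_le
          have h2 : (((nc-1):ℕ):ℝ) = (nc:ℝ) - 1 := by
            have : (1:ℕ) ≤ nc := hnc1
            push_cast [this]
            ring
          rw [h2] at h1
          linarith
      _ = (nc:ℝ) * (1/(c:ℝ)) + ((c:ℝ)-1)/c := hkey




variable (u : ℕ → ℕ) (hu1 : u 1 = 1) (hu : ∀ k, 1 ≤ k → u (k + 1) = u k * (u k + 1))

include hu1 hu in
lemma psi_id (M k : ℕ) (hM : 2 ≤ M) (hk : 1 ≤ k) :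
    (∑ j ∈ Icc 1 k, phi M (u j + 1)) + (M:ℝ)/((M:ℝ)-1)
      = (∑ j ∈ Icc 1 k, (1:ℝ)/(u j:ℝ)) + (M:ℝ)/(((M:ℝ)-1)*(u (k+1):ℝ)) := by
  have hM1 : (1:ℝ) < M := by exact_mod_cast hM
  have hterm : ∀ j ∈ Icc 1 k, phi M (u j + 1)
      = 1/(u j:ℝ) - ((M:ℝ)/((M:ℝ)-1)) * (1/((u j:ℝ)+1)) := by
    intro j hj
    rw [mem_Icc] at hj
    have huj : 1 ≤ u j := u_pos u hu1 hu j hj.1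
    have hujr : (1:ℝ) ≤ (u j:ℝ) := by exact_mod_cast huj
    unfold phi
    push_cast
    have h1 : (u j:ℝ) ≠ 0 := by linarith
    have h2 : (u j:ℝ) + 1 ≠ 0 := by linarith
    have h3 : (M:ℝ) - 1 ≠ 0 := by linarith
    simp only [add_sub_cancel_right]
    field_simp
  rw [Finset.sum_congr rfl hterm, Finset.sum_sub_distrib, ← Finset.mul_sum,
    u_telescope u hu1 hu k]
  have hukr : (1:ℝ) ≤ (u (k+1):ℝ) := by exact_mod_cast u_pos u hu1 hu (k+1) (by omega)
  have he : ((M:ℝ)/((M:ℝ)-1)) * (1/(u (k+1):ℝ)) = (M:ℝ)/(((M:ℝ)-1)*(u (k+1):ℝ)) := by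
    rw [div_mul_div_comm, mul_one]
  have hexp : ((M:ℝ)/((M:ℝ)-1)) * (1 - 1/(u (k+1):ℝ))
      = (M:ℝ)/((M:ℝ)-1) - ((M:ℝ)/((M:ℝ)-1)) * (1/(u (k+1):ℝ)) := by ring
  rw [hexp, he]
  ring

include hu1 hu in
lemma bin_weight (M k : ℕ) (hM : 2 ≤ M) (hk : 1 ≤ k) (hukM : u k < M) (hMuk : M ≤ u (k+1))
    {ι : Type} (I : Finset ι) (x : ι → ℝ)
    (hx : ∀ i ∈ I, x i ∈ Set.Icc (0:ℝ) 1) (hsum : ∑ i ∈ I, x i ≤ 1) :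
    ∑ i ∈ I, wt M (x i)
      ≤ (∑ j ∈ Icc 1 k, (1:ℝ)/(u j : ℝ)) + (M:ℝ)/(((M:ℝ)-1) * (u (k+1) : ℝ)) := by
  classical
  have hM1 : (1:ℝ) < M := by exact_mod_cast hM
  set r : ℝ := (M:ℝ)/((M:ℝ)-1) with hr
  have hrpos : 0 < r := by rw [hr]; apply div_pos <;> linarith
  set S := I.filter (fun i => cls M (x i) = M) with hS
  set B := I.filter (fun i => ¬ cls M (x i) = M) with hB
  have hsplit : ∑ i ∈ S, wt M (x i) + ∑ i ∈ B, wt M (x i) = ∑ i ∈ I, wt M (x i) :=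
    Finset.sum_filter_add_sum_filter_not I _ _
  have hsplitx : ∑ i ∈ S, x i + ∑ i ∈ B, x i = ∑ i ∈ I, x i :=
    Finset.sum_filter_add_sum_filter_not I _ _
  have hSwt : ∑ i ∈ S, wt M (x i) = r * ∑ i ∈ S, x i := by
    rw [Finset.mul_sum]
    apply Finset.sum_congr rfl
    intro i hi
    rw [hS, mem_filter] at hi
    rw [wt_small M hM hi.2, hr]
  -- large facts
  have hBfact : ∀ i ∈ B, 1 ≤ cls M (x i) ∧ cls M (x i) < M ∧
      1 / ((cls M (x i) : ℝ) + 1) < x i ∧ x i ≤ 1 / (cls M (x i) : ℝ) := by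
    intro i hi
    rw [hB, mem_filter] at hi
    exact cls_large M hM (hx i hi.1).2 hi.2
  have hBI : B ⊆ I := Finset.filter_subset _ _
  have hSI : S ⊆ I := Finset.filter_subset _ _
  set Q : ι → ℕ := fun i => cls M (x i) + 1 with hQ
  set L : List ℕ := B.toList.map Q with hL
  have hLinv : (L.map invq).sum = ∑ i ∈ B, invq (Q i) := by
    rw [hL, List.map_map, Finset.sum_map_toList]
    rfl
  have hLphi : (L.map (phi M)).sum = ∑ i ∈ B, phi M (Q i) := by
    rw [hL, List.map_map, Finset.sum_map_toList]
    rfl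
  have hinv_lt : ∀ i ∈ B, invq (Q i) < x i := by
    intro i hi
    have h := (hBfact i hi).2.2.1
    rw [invq, hQ]
    push_cast
    exact h
  have hx_nonneg : ∀ i ∈ I, 0 ≤ x i := fun i hi => (hx i hi).1
  have hBx_le : ∑ i ∈ B, x i ≤ ∑ i ∈ I, x i :=
    Finset.sum_le_sum_of_subset_of_nonneg hBI (fun i hi _ => hx_nonneg i hi)
  have hSx_nonneg : 0 ≤ ∑ i ∈ S, x i :=
    Finset.sum_nonneg (fun i hi => hx_nonneg i (hSI hi))
  have hLsum : (L.map invq).sum < 1/(u 1 : ℝ) := by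
    rw [hu1, hLinv]
    norm_num
    rcases B.eq_empty_or_nonempty with hBe | hBne
    · rw [hBe, Finset.sum_empty]; norm_num
    · have h1 : ∑ i ∈ B, invq (Q i) < ∑ i ∈ B, x i :=
        Finset.sum_lt_sum_of_nonempty hBne hinv_lt
      linarith
  have hq2 : ∀ q ∈ L, 2 ≤ q := by
    intro q hq
    rw [hL, List.mem_map] at hq
    obtain ⟨i, hi, rfl⟩ := hq
    have := (hBfact i (Finset.mem_toList.mp hi)).1
    simp only [hQ]
    omega
  have hext := extremal u hu1 hu M k hM hk hukM hMuk L.length L 1 (le_refl _)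
    (le_refl _) (by omega) hq2 hLsum
  rw [hLphi] at hext
  -- wt identity on B
  have hwtB : ∀ i ∈ B, wt M (x i) = phi M (Q i) + r * invq (Q i) := by
    intro i hi
    have hc1 := (hBfact i hi).1
    have hcne : cls M (x i) ≠ M := by
      rw [hB, mem_filter] at hi
      exact hi.2
    have hcr : (1:ℝ) ≤ (cls M (x i) : ℝ) := by exact_mod_cast hc1
    rw [wt_large M hM hcne, phi, invq, hQ, hr]
    push_cast
    have h1 : (cls M (x i):ℝ) ≠ 0 := by linarith
    have h2 : (cls M (x i):ℝ) + 1 ≠ 0 := by linarith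
    have h3 : (M:ℝ) - 1 ≠ 0 := by linarith
    simp only [add_sub_cancel_right]
    field_simp
    ring
  have hBwt : ∑ i ∈ B, wt M (x i) = ∑ i ∈ B, phi M (Q i) + r * ∑ i ∈ B, invq (Q i) := by
    rw [Finset.sum_congr rfl hwtB, Finset.sum_add_distrib, ← Finset.mul_sum]
  have hBinv_le : ∑ i ∈ B, invq (Q i) ≤ ∑ i ∈ B, x i :=
    Finset.sum_le_sum (fun i hi => (hinv_lt i hi).le)
  have hfinal : ∑ i ∈ I, wt M (x i) ≤ ∑ j ∈ Icc 1 k, phi M (u j + 1) + r := by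
    have h1 : r * ∑ i ∈ B, invq (Q i) + r * ∑ i ∈ S, x i ≤ r * 1 := by
      rw [← mul_add]
      apply mul_le_mul_of_nonneg_left ?_ hrpos.le
      linarith
    linarith
  rw [hr] at hfinal
  have := psi_id u hu1 hu M k hM hk
  linarith





lemma pack_numBins (M : ℕ) (hM : 2 ≤ M) (a : Fin n → ℝ)
    (ha : ∀ i, a i ∈ Set.Icc (0:ℝ) 1) :
    ((numBins (pack M a)) : ℝ) ≤ (∑ i, wt M (a i)) + ((M:ℝ) - 1) := by
  have hmaps : ∀ b ∈ Finset.univ.image (pack M a), b.unpair.1 ∈ Finset.Icc 1 M := by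
    intro b hb
    rw [Finset.mem_image] at hb
    obtain ⟨i, _, rfl⟩ := hb
    rw [pack, Nat.unpair_pair, Finset.mem_Icc]
    exact ⟨cls_pos M hM (ha i).2, cls_le M hM⟩
  have hfib := Finset.card_eq_sum_card_fiberwise hmaps
  have hcast : ((numBins (pack M a)) : ℝ)
      = ∑ c ∈ Finset.Icc 1 M,
        ((((Finset.univ.image (pack M a)).filter (fun b => b.unpair.1 = c)).card : ℕ) : ℝ) := by
    rw [numBins, hfib]
    push_cast
    rfl
  rw [hcast]
  have hstep : ∑ c ∈ Finset.Icc 1 M,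
      ((((Finset.univ.image (pack M a)).filter (fun b => b.unpair.1 = c)).card : ℕ) : ℝ)
      ≤ ∑ c ∈ Finset.Icc 1 M,
        ((∑ i ∈ Finset.univ.filter (fun i => cls M (a i) = c), wt M (a i))
          + (if c = M then (1:ℝ) else ((c:ℝ) - 1)/c)) :=
    Finset.sum_le_sum (fun c hc => class_card_le M hM a ha c hc)
  apply le_trans hstep
  rw [Finset.sum_add_distrib]
  have hwt : ∑ c ∈ Finset.Icc 1 M,
      ∑ i ∈ Finset.univ.filter (fun i => cls M (a i) = c), wt M (a i)
      = ∑ i, wt M (a i) :=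
    Finset.sum_fiberwise_of_maps_to
      (fun i _ => by rw [Finset.mem_Icc]; exact ⟨cls_pos M hM (ha i).2, cls_le M hM⟩) _
  rw [hwt]
  have herr : ∑ c ∈ Finset.Icc 1 M, (if c = M then (1:ℝ) else ((c:ℝ) - 1)/c)
      ≤ (M:ℝ) - 1 := by
    have hins : Finset.Icc 1 M = insert 1 (Finset.Icc 2 M) := by
      ext y
      simp only [Finset.mem_Icc, Finset.mem_insert]
      omega
    rw [hins, Finset.sum_insert (by rw [Finset.mem_Icc]; omega)]
    have h1 : (if (1:ℕ) = M then (1:ℝ) else (((1:ℕ):ℝ) - 1)/((1:ℕ):ℝ)) = 0 := by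
      rw [if_neg (by omega)]
      norm_num
    rw [h1, zero_add]
    have h2 : ∑ c ∈ Finset.Icc 2 M, (if c = M then (1:ℝ) else ((c:ℝ) - 1)/c)
        ≤ (Finset.Icc 2 M).card • (1:ℝ) := by
      apply Finset.sum_le_card_nsmul
      intro c hc
      rw [Finset.mem_Icc] at hc
      split_ifs
      · exact le_refl _
      · have hc2 : (2:ℝ) ≤ c := by exact_mod_cast hc.1
        rw [div_le_one (by linarith)]
        linarith
    have h3 : ((Finset.Icc 2 M).card : ℝ) = (M:ℝ) - 1 := by
      rw [Nat.card_Icc]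
      have : M + 1 - 2 = M - 1 := by omega
      rw [this]
      have : (1:ℕ) ≤ M := by omega
      push_cast [this]
      ring
    rw [nsmul_eq_mul, mul_one] at h2
    linarith [h2, h3.le, h3.ge]
  linarith

lemma opt_exists (a : Fin n → ℝ) (ha : ∀ i, a i ∈ Set.Icc (0:ℝ) 1) :
    ∃ g : Fin n → ℕ, IsPacking a g ∧ numBins g = optBP a := by
  have hne : {B : ℕ | ∃ f : Fin n → ℕ, IsPacking a f ∧ numBins f = B}.Nonempty := by
    refine ⟨numBins (fun i : Fin n => (i:ℕ)), fun i => (i:ℕ), ?_, rfl⟩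
    intro b
    have hcard : (Finset.univ.filter (fun i : Fin n => (i:ℕ) = b)).card ≤ 1 := by
      rw [Finset.card_le_one]
      intro i hi j hj
      rw [mem_filter] at hi hj
      exact Fin.ext (hi.2.trans hj.2.symm)
    calc ∑ i ∈ Finset.univ.filter (fun i : Fin n => (i:ℕ) = b), a i
        ≤ ∑ _i ∈ Finset.univ.filter (fun i : Fin n => (i:ℕ) = b), (1:ℝ) :=
          Finset.sum_le_sum (fun i _ => (ha i).2)
    _ = ((Finset.univ.filter (fun i : Fin n => (i:ℕ) = b)).card : ℝ) := by
          rw [Finset.sum_const, nsmul_eq_mul, mul_one]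
    _ ≤ 1 := by exact_mod_cast hcard
  obtain ⟨f, hf, hfB⟩ := Nat.sInf_mem hne
  exact ⟨f, hf, hfB⟩



end LeeLeeAux


/-- (Lee–Lee) The sequence `u` is given by `u 1 = 1` and
`u (k+1) = u k·(u k + 1)` for `k ≥ 1`.  Let `M ≥ 2` be an integer and `k ≥ 1`
the index with `u k < M ≤ u (k+1)`.  For every finite sequence of item sizes
in `[0,1]`, there is an `M`-bounded-space bin packing of the items using at
most `(∑_{i=1}^{k} 1/u i + M/((M-1)·u (k+1)))·opt_BP + (M-1)` bins, where
`opt_BP` is the optimal (offline) number of bins. -/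
theorem bounded_space_bin_packing (u : ℕ → ℕ) (hu1 : u 1 = 1)
    (hu : ∀ k, 1 ≤ k → u (k + 1) = u k * (u k + 1))
    (M k : ℕ) (hM : 2 ≤ M) (hk : 1 ≤ k)
    (hukM : u k < M) (hMuk : M ≤ u (k + 1))
    {n : ℕ} (a : Fin n → ℝ) (ha : ∀ i, a i ∈ Set.Icc (0 : ℝ) 1) :
    ∃ f : Fin n → ℕ, IsPacking a f ∧ BoundedSpacePacking M f ∧
      (numBins f : ℝ) ≤
        (∑ i ∈ Finset.Icc 1 k, (1 : ℝ) / u i + M / ((M - 1) * u (k + 1))) *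
          optBP a + (M - 1) := by
  classical
  refine ⟨LeeLeeAux.pack M a, LeeLeeAux.pack_isPacking M hM a ha,
    LeeLeeAux.pack_boundedSpace M hM a ha, ?_⟩
  have h1 := LeeLeeAux.pack_numBins M hM a ha
  obtain ⟨g, hg, hgB⟩ := LeeLeeAux.opt_exists a ha
  have hfib := Finset.sum_fiberwise_of_maps_to (s := Finset.univ)
    (t := Finset.univ.image g) (g := g)
    (fun i _ => Finset.mem_image_of_mem g (Finset.mem_univ i))
    (fun i => LeeLeeAux.wt M (a i))
  have hbins : ∀ b ∈ Finset.univ.image g,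
      ∑ i ∈ Finset.univ.filter (fun i => g i = b), LeeLeeAux.wt M (a i)
        ≤ (∑ j ∈ Finset.Icc 1 k, (1:ℝ)/(u j : ℝ))
            + (M:ℝ)/(((M:ℝ)-1) * (u (k+1) : ℝ)) :=
    fun b _ => LeeLeeAux.bin_weight u hu1 hu M k hM hk hukM hMuk _ a
      (fun i _ => ha i) (hg b)
  have h2 : ∑ i, LeeLeeAux.wt M (a i)
      ≤ ((∑ j ∈ Finset.Icc 1 k, (1:ℝ)/(u j : ℝ))
          + (M:ℝ)/(((M:ℝ)-1) * (u (k+1) : ℝ))) * (optBP a : ℝ) := by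
    rw [← hfib]
    calc ∑ b ∈ Finset.univ.image g,
          ∑ i ∈ Finset.univ.filter (fun i => g i = b), LeeLeeAux.wt M (a i)
        ≤ ∑ _b ∈ Finset.univ.image g,
            ((∑ j ∈ Finset.Icc 1 k, (1:ℝ)/(u j : ℝ))
              + (M:ℝ)/(((M:ℝ)-1) * (u (k+1) : ℝ))) := Finset.sum_le_sum hbins
    _ = ((Finset.univ.image g).card : ℝ) *
          ((∑ j ∈ Finset.Icc 1 k, (1:ℝ)/(u j : ℝ))
            + (M:ℝ)/(((M:ℝ)-1) * (u (k+1) : ℝ))) := by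
        rw [Finset.sum_const, nsmul_eq_mul]
    _ = ((∑ j ∈ Finset.Icc 1 k, (1:ℝ)/(u j : ℝ))
          + (M:ℝ)/(((M:ℝ)-1) * (u (k+1) : ℝ))) * (optBP a : ℝ) := by
        rw [mul_comm, show (Finset.univ.image g).card = optBP a from hgB]
  linarith
end

section
/- Fix integers k ≥ 1 and Γ ≥ 1. For each i ∈ {1, …, k}, set x_i := k·u_{k+1}/(u_i + 1) + 1 (an integer since u_i + 1 divides u_{k+1}) and D := 2k·u_{k+1}, and consider a collection of items of k types consisting of Γ·u_k items of each type i, where each item of type i has size 2·x_i. Then: (i) the items can be partitioned into exactly Γ·u_k parts, each containing one item of every type, and each part has total size exactly D; (ii) every partition of the items into parts such that each part contains items of a single type and each part has total size at most D consists of at least Γ·u_k · Σ_{i=1}^{k} 1/u_i parts. -/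
lemma LBI_pos (u : ℕ → ℕ) (hu1 : u 1 = 1) (hu : ∀ k, 1 ≤ k → u (k + 1) = u k * (u k + 1)) :
    ∀ i, 1 ≤ i → 1 ≤ u i := by
  intro i hi
  induction i with
  | zero => omega
  | succ n ih =>
    rcases Nat.eq_or_lt_of_le hi with h | h
    · rw [← h, hu1]
    · have hn : 1 ≤ n := by omega
      have h2 := ih hn
      rw [hu n hn]
      exact Nat.one_le_iff_ne_zero.2 (by positivity)

lemma LBI_dvd (u : ℕ → ℕ) (hu : ∀ k, 1 ≤ k → u (k + 1) = u k * (u k + 1)) :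
    ∀ i j, 1 ≤ i → i ≤ j → u i ∣ u j := by
  intro i j hi hij
  induction j with
  | zero => omega
  | succ n ih =>
    rcases Nat.eq_or_lt_of_le hij with h | h
    · rw [h]
    · have hn : 1 ≤ n := by omega
      have h2 := ih (by omega)
      rw [hu n hn]
      exact h2.mul_right _

lemma LBI_succ_dvd (u : ℕ → ℕ) (hu : ∀ k, 1 ≤ k → u (k + 1) = u k * (u k + 1)) :
    ∀ i j, 1 ≤ i → i < j → (u i + 1) ∣ u j := by
  intro i j hi hij
  have h1 : (u i + 1) ∣ u (i + 1) := by rw [hu i hi]; exact Dvd.intro_left (u i) rfl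
  exact h1.trans (LBI_dvd u hu (i+1) j (by omega) hij)

lemma LBI_telescope (u : ℕ → ℕ) (hu1 : u 1 = 1)
    (hu : ∀ k, 1 ≤ k → u (k + 1) = u k * (u k + 1)) :
    ∀ k, 1 ≤ k → (∑ i ∈ Finset.Icc 1 k, u (k + 1) / (u i + 1)) + 1 = u (k + 1) := by
  intro k hk
  induction k with
  | zero => omega
  | succ n ih =>
    rcases Nat.eq_or_lt_of_le hk with h | h
    · rw [← h]
      norm_num [hu1, hu 1 le_rfl]
    · have hn : 1 ≤ n := by omega
      have ihn := ih hn
      have hU : 1 ≤ u (n + 1) := LBI_pos u hu1 hu (n+1) (by omega)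
      rw [Finset.sum_Icc_succ_top (by omega : 1 ≤ n + 1)]
      have hlast : u (n + 1 + 1) / (u (n + 1) + 1) = u (n + 1) := by
        rw [hu (n+1) (by omega)]
        exact Nat.mul_div_cancel (m := u (n+1)) (by omega)
      have hstep : ∀ i ∈ Finset.Icc 1 n, u (n + 1 + 1) / (u i + 1)
          = (u (n + 1) + 1) * (u (n + 1) / (u i + 1)) := by
        intro i hi
        simp only [Finset.mem_Icc] at hi
        have hd : (u i + 1) ∣ u (n + 1) := LBI_succ_dvd u hu i (n+1) hi.1 (by omega)
        rw [hu (n+1) (by omega), mul_comm (u (n+1)) (u (n+1) + 1),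
          Nat.mul_div_assoc _ hd]
      rw [Finset.sum_congr rfl hstep, ← Finset.mul_sum, hlast, hu (n+1) (by omega)]
      have h3 : (u (n+1) + 1) * ((∑ i ∈ Finset.Icc 1 n, u (n + 1) / (u i + 1)) + 1)
          = (u (n+1) + 1) * u (n+1) := by rw [ihn]
      nlinarith [h3]

/-- The combinatorial core of the lower-bound instance `I_k`.  The sequence
`u` is given by `u 1 = 1` and `u (k+1) = u k·(u k + 1)` for `k ≥ 1`.  Fix
`k ≥ 1` and `Γ ≥ 1`.  For `i ∈ {1,…,k}` set `x i := k·u (k+1)/(u i + 1) + 1`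
and `D := 2·k·u (k+1)`.  The items are indexed by `Fin k × Fin (Γ·u k)`:
there are `Γ·u k` items of each type `i`, and each item of type `i` has size
`2·x i`.  Then:
(i) the items can be partitioned into exactly `Γ·u k` parts, each containing
exactly one item of every type, and each part having total size exactly `D`;
(ii) every partition of the items into parts containing items of a single
type, with each part of total size at most `D`, has at least
`Γ·u k·∑_{i=1}^{k} 1/u i` parts. -/
theorem lower_bound_instance (u : ℕ → ℕ) (hu1 : u 1 = 1)
    (hu : ∀ k, 1 ≤ k → u (k + 1) = u k * (u k + 1))
    (k Γ : ℕ) (hk : 1 ≤ k) (hΓ : 1 ≤ Γ) :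
    (∃ P : Fin k × Fin (Γ * u k) → Fin (Γ * u k),
      (∀ p : Fin (Γ * u k), ∀ i : Fin k,
        ∃! j : Fin (Γ * u k), P (i, j) = p) ∧
      (∀ p : Fin (Γ * u k),
        ∑ itm ∈ Finset.univ.filter (fun itm : Fin k × Fin (Γ * u k) => P itm = p),
            2 * (k * u (k + 1) / (u (itm.1.val + 1) + 1) + 1)
          = 2 * k * u (k + 1)))
    ∧
    (∀ Q : Fin k × Fin (Γ * u k) → ℕ,
      (∀ itm itm' : Fin k × Fin (Γ * u k), Q itm = Q itm' → itm.1 = itm'.1) →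
      (∀ p ∈ Finset.univ.image Q,
        ∑ itm ∈ Finset.univ.filter (fun itm : Fin k × Fin (Γ * u k) => Q itm = p),
            2 * (k * u (k + 1) / (u (itm.1.val + 1) + 1) + 1)
          ≤ 2 * k * u (k + 1)) →
      (Γ * u k : ℝ) * ∑ i ∈ Finset.Icc 1 k, (1 : ℝ) / u i ≤
        ((Finset.univ.image Q).card : ℝ)) := by
  have hT := LBI_telescope u hu1 hu k hk
  have hdvd : ∀ i : Fin k, (u (i.val + 1) + 1) ∣ u (k + 1) := fun i =>
    LBI_succ_dvd u hu (i.val + 1) (k + 1) (by omega) (by omega)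
  have hupos : ∀ i, 1 ≤ i → 1 ≤ u i := LBI_pos u hu1 hu
  constructor
  · refine ⟨fun itm => itm.2, fun p i => ⟨p, rfl, fun y hy => hy⟩, fun p => ?_⟩
    rw [Finset.sum_filter, Fintype.sum_prod_type]
    have inner : ∀ i : Fin k,
        (∑ j : Fin (Γ * u k), if j = p then
            2 * (k * u (k + 1) / (u (i.val + 1) + 1) + 1) else 0)
          = 2 * (k * u (k + 1) / (u (i.val + 1) + 1) + 1) := by
      intro i
      simp
    simp only [inner]
    have expand : ∀ i : Fin k,
        2 * (k * u (k + 1) / (u (i.val + 1) + 1) + 1)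
          = 2 * (k * (u (k + 1) / (u (i.val + 1) + 1))) + 2 := by
      intro i
      rw [Nat.mul_div_assoc k (hdvd i)]
      ring
    rw [Finset.sum_congr rfl (fun i _ => expand i), Finset.sum_add_distrib,
      Finset.sum_const, Finset.card_univ, Fintype.card_fin, ← Finset.mul_sum,
      ← Finset.mul_sum]
    have hre : (∑ i : Fin k, u (k + 1) / (u (i.val + 1) + 1))
        = ∑ i ∈ Finset.Icc 1 k, u (k + 1) / (u i + 1) := by
      rw [Fin.sum_univ_eq_sum_range (fun i => u (k + 1) / (u (i + 1) + 1)) k,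
        ← Finset.Ico_add_one_right_eq_Icc, Finset.sum_Ico_eq_sum_range]
      exact Finset.sum_congr rfl fun i _ => by rw [add_comm 1 i]
    rw [hre, smul_eq_mul]
    have h5 : k * ((∑ i ∈ Finset.Icc 1 k, u (k + 1) / (u i + 1)) + 1)
        = k * u (k + 1) := by rw [hT]
    linarith [h5]
  · intro Q hsingle hbound
    set S : Fin k → Finset ℕ := fun i =>
      (Finset.univ.filter (fun itm : Fin k × Fin (Γ * u k) => itm.1 = i)).image Q with hS
    have hSsub : ∀ i, S i ⊆ Finset.univ.image Q := fun i =>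
      Finset.image_subset_image (Finset.filter_subset _ _)
    have hdisj : ∀ i j : Fin k, i ≠ j → Disjoint (S i) (S j) := by
      intro i j hij
      rw [Finset.disjoint_left]
      intro p hpi hpj
      obtain ⟨a, ha, hQa⟩ := Finset.mem_image.1 hpi
      obtain ⟨b, hb, hQb⟩ := Finset.mem_image.1 hpj
      simp only [Finset.mem_filter] at ha hb
      exact hij (ha.2 ▸ hb.2 ▸ hsingle a b (hQa.trans hQb.symm))
    have hcards : ∑ i : Fin k, (S i).card ≤ (Finset.univ.image Q).card := by
      rw [← Finset.card_biUnion (fun i _ j _ hij => hdisj i j hij)]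
      exact Finset.card_le_card (Finset.biUnion_subset.2 fun i _ => hSsub i)
    have step4 : ∀ i : Fin k, Γ * u k ≤ (S i).card * u (i.val + 1) := by
      intro i
      set T := Finset.univ.filter (fun itm : Fin k × Fin (Γ * u k) => itm.1 = i) with hTdef
      have hTcard : T.card = Γ * u k := by
        have : T = Finset.univ.map
            ⟨fun j : Fin (Γ * u k) => ((i, j) : Fin k × Fin (Γ * u k)), fun a b hab => by
              simpa [Prod.ext_iff] using hab⟩ := by
          ext ⟨a, b⟩
          simp [hTdef, Prod.ext_iff, eq_comm]
          exact ⟨fun h => ⟨b, h.symm, rfl⟩, fun ⟨c, h1, _⟩ => h1.symm⟩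
        rw [this, Finset.card_map, Finset.card_univ, Fintype.card_fin]
      have hfibbound : ∀ p ∈ T.image Q,
          (T.filter (fun itm => Q itm = p)).card ≤ u (i.val + 1) := by
        intro p hp
        obtain ⟨itm0, hitm0T, hitm0⟩ := Finset.mem_image.1 hp
        simp only [hTdef, Finset.mem_filter, Finset.mem_univ, true_and] at hitm0T
        have hfib : Finset.univ.filter (fun itm : Fin k × Fin (Γ * u k) => Q itm = p)
            = T.filter (fun itm => Q itm = p) := by
          ext itm
          simp only [hTdef, Finset.mem_filter, Finset.mem_univ, true_and,
            Finset.filter_filter]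
          constructor
          · intro hq
            exact ⟨by rw [← hitm0T]; exact hsingle itm itm0 (hq.trans hitm0.symm), hq⟩
          · exact fun h => h.2
        have hpmem : p ∈ Finset.univ.image Q :=
          Finset.mem_image.2 ⟨itm0, Finset.mem_univ _, hitm0⟩
        have hb := hbound p hpmem
        rw [hfib] at hb
        have hconst : ∀ itm ∈ T.filter (fun itm => Q itm = p),
            2 * (k * u (k + 1) / (u (itm.1.val + 1) + 1) + 1)
              = 2 * (k * u (k + 1) / (u (i.val + 1) + 1) + 1) := by
          intro itm hitm
          simp only [hTdef, Finset.mem_filter, Finset.mem_univ, true_and] at hitm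
          rw [hitm.1]
        rw [Finset.sum_congr rfl hconst, Finset.sum_const, smul_eq_mul] at hb
        obtain ⟨d, hdq⟩ : ∃ d, k * u (k + 1) = (u (i.val + 1) + 1) * d :=
          ((hdvd i).mul_left k)
        have hdd : k * u (k + 1) / (u (i.val + 1) + 1) = d := by
          rw [hdq]; exact Nat.mul_div_cancel_left _ (by omega)
        rw [hdd] at hb
        have hb2 : (T.filter (fun itm => Q itm = p)).card * (2 * (d + 1))
            ≤ 2 * ((u (i.val + 1) + 1) * d) := by
          calc _ ≤ 2 * k * u (k + 1) := hb
          _ = 2 * ((u (i.val + 1) + 1) * d) := by rw [mul_assoc, hdq]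
        by_contra hcon
        push_neg at hcon
        nlinarith [hb2, hcon]
      have := Finset.card_eq_sum_card_image Q T
      rw [hTcard] at this
      rw [this]
      have h6 := Finset.sum_le_card_nsmul (T.image Q)
        (fun p => (T.filter (fun itm => Q itm = p)).card) (u (i.val + 1)) hfibbound
      simpa [smul_eq_mul] using h6
    have main : ∀ i : Fin k, ((Γ * u k : ℕ) : ℝ) / u (i.val + 1) ≤ ((S i).card : ℝ) := by
      intro i
      have hup : (0 : ℝ) < u (i.val + 1) := by
        exact_mod_cast hupos (i.val + 1) (by omega)
      rw [div_le_iff₀ hup]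
      exact_mod_cast step4 i
    have hre2 : (∑ i ∈ Finset.Icc 1 k, ((Γ * u k : ℕ) : ℝ) / u i)
        = ∑ i : Fin k, ((Γ * u k : ℕ) : ℝ) / u (i.val + 1) := by
      rw [Fin.sum_univ_eq_sum_range (fun i => ((Γ * u k : ℕ) : ℝ) / u (i + 1)) k,
        ← Finset.Ico_add_one_right_eq_Icc, Finset.sum_Ico_eq_sum_range]
      exact Finset.sum_congr rfl fun i _ => by rw [add_comm 1 i]
    calc (Γ * u k : ℝ) * ∑ i ∈ Finset.Icc 1 k, (1 : ℝ) / u i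
        = ∑ i ∈ Finset.Icc 1 k, ((Γ * u k : ℕ) : ℝ) / u i := by
          rw [Finset.mul_sum]
          refine Finset.sum_congr rfl fun i _ => ?_
          push_cast
          ring
      _ = ∑ i : Fin k, ((Γ * u k : ℕ) : ℝ) / u (i.val + 1) := hre2
      _ ≤ ∑ i : Fin k, ((S i).card : ℝ) := Finset.sum_le_sum fun i _ => main i
      _ ≤ ((Finset.univ.image Q).card : ℝ) := by exact_mod_cast hcards
end
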